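/- arXiv:2209.01190 — 4 statements merged into one kernel-verified Lean document; each statement's English description precedes it below -/
import Mathlib

section
/- Let m+n points be in convex position on a circle, colored with m red points and n blue points, such that all red points appear consecutively in the circular order. Then the straight-line drawing of the complete bipartite graph between red and blue points has exactly 2 edges on the convex hull boundary, and any plane (crossing-free) subset of its edges has cardinality at most m+n−1. -/
open Real

open scoped Classical

noncomputable section BipartiteAux

/-- The planar cross product of two vectors. -/
def cr (u v : ℝ × ℝ) : ℝ := u.1 * v.2 - u.2 * v.1

lemma cr_swap (u v : ℝ × ℝ) : cr u v = - cr v u := by simp [cr]; ring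

lemma sin_combo_neg {a b : ℝ} (ha : 0 < a) (hb : 0 < b) (hab : a + b < 2 * π) :
    Real.sin (a + b) - Real.sin a - Real.sin b < 0 := by
  have hpi := Real.pi_pos
  have e1 : Real.sin a = 2 * Real.sin (a/2) * Real.cos (a/2) := by
    rw [show a = 2 * (a/2) by ring, Real.sin_two_mul]; ring_nf
  have e2 : Real.sin b = 2 * Real.sin (b/2) * Real.cos (b/2) := by
    rw [show b = 2 * (b/2) by ring, Real.sin_two_mul]; ring_nf
  have e3 : Real.sin (a + b) = 2 * Real.sin (a/2 + b/2) * Real.cos (a/2 + b/2) := by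
    rw [show a + b = 2 * (a/2 + b/2) by ring, Real.sin_two_mul]
  have hs1 : 0 < Real.sin (a/2) := Real.sin_pos_of_pos_of_lt_pi (by linarith) (by linarith)
  have hs2 : 0 < Real.sin (b/2) := Real.sin_pos_of_pos_of_lt_pi (by linarith) (by linarith)
  have hs3 : 0 < Real.sin (a/2 + b/2) :=
    Real.sin_pos_of_pos_of_lt_pi (by linarith) (by linarith)
  have key : Real.sin (a + b) - Real.sin a - Real.sin b
      = -4 * Real.sin (a/2) * Real.sin (b/2) * Real.sin (a/2 + b/2) := by
    rw [e1, e2, e3, Real.sin_add, Real.cos_add]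
    have p1 := Real.sin_sq_add_cos_sq (a/2)
    have p2 := Real.sin_sq_add_cos_sq (b/2)
    linear_combination (2*Real.sin (a/2)*Real.cos (a/2)) * p2 +
      (2*Real.sin (b/2)*Real.cos (b/2)) * p1
  rw [key]
  nlinarith [mul_pos (mul_pos hs1 hs2) hs3]

lemma cross_circle (c : ℝ × ℝ) {ρ : ℝ} (hρ : 0 < ρ) {α β γ : ℝ}
    (h1 : α < β) (h2 : β < γ) (h3 : γ - α < 2 * π) :
    cr ((c.1 + ρ * Real.cos γ, c.2 + ρ * Real.sin γ) - (c.1 + ρ * Real.cos α, c.2 + ρ * Real.sin α))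
       ((c.1 + ρ * Real.cos β, c.2 + ρ * Real.sin β) - (c.1 + ρ * Real.cos α, c.2 + ρ * Real.sin α)) < 0 := by
  have key : cr ((c.1 + ρ * Real.cos γ, c.2 + ρ * Real.sin γ) - (c.1 + ρ * Real.cos α, c.2 + ρ * Real.sin α))
       ((c.1 + ρ * Real.cos β, c.2 + ρ * Real.sin β) - (c.1 + ρ * Real.cos α, c.2 + ρ * Real.sin α))
      = ρ^2 * (Real.sin ((β - α) + (γ - β)) - Real.sin (β - α) - Real.sin (γ - β)) := by
    simp only [cr, Prod.fst_sub, Prod.snd_sub]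
    rw [show (β - α) + (γ - β) = γ - α by ring, Real.sin_sub, Real.sin_sub, Real.sin_sub]
    ring
  rw [key]
  have := sin_combo_neg (a := β - α) (b := γ - β) (by linarith) (by linarith) (by linarith)
  nlinarith [sq_nonneg ρ, mul_pos hρ hρ]

lemma segments_cross {A B C D : ℝ × ℝ}
    (hg0 : cr (C - A) (B - A) < 0) (hg1 : 0 < cr (C - A) (D - A))
    (hf0 : 0 < cr (D - B) (A - B)) (hf1 : cr (D - B) (C - B) < 0) :
    ∃ X, X ∈ openSegment ℝ A C ∩ openSegment ℝ B D := by
  simp only [cr, Prod.fst_sub, Prod.snd_sub] at hg0 hg1 hf0 hf1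
  set f0 : ℝ := (D.1 - B.1) * (A.2 - B.2) - (D.2 - B.2) * (A.1 - B.1) with hf0d
  set f1 : ℝ := (D.1 - B.1) * (C.2 - B.2) - (D.2 - B.2) * (C.1 - B.1) with hf1d
  set g0 : ℝ := (C.1 - A.1) * (B.2 - A.2) - (C.2 - A.2) * (B.1 - A.1) with hg0d
  set g1 : ℝ := (C.1 - A.1) * (D.2 - A.2) - (C.2 - A.2) * (D.1 - A.1) with hg1d
  have hfd : f0 - f1 > 0 := by linarith
  have hgd : g0 - g1 < 0 := by linarith
  set t : ℝ := f0 / (f0 - f1) with ht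
  set s : ℝ := g0 / (g0 - g1) with hs
  have ht0 : 0 < t := div_pos hf0 hfd
  have ht1 : t < 1 := by
    rw [ht, div_lt_one hfd]; linarith
  have hs0 : 0 < s := div_pos_of_neg_of_neg hg0 hgd
  have hs1 : s < 1 := by
    rw [hs, div_lt_one_of_neg hgd]; linarith
  refine ⟨(1 - t) • A + t • C, ⟨⟨1 - t, t, by linarith, ht0, by ring, rfl⟩, ?_⟩⟩
  refine ⟨1 - s, s, by linarith, hs0, by ring, ?_⟩
  have hfne : f0 - f1 ≠ 0 := ne_of_gt hfd
  have hgne : g0 - g1 ≠ 0 := ne_of_lt hgd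
  apply Prod.ext
  · simp only [Prod.fst_add, Prod.smul_fst, smul_eq_mul]
    rw [ht, hs, hf0d, hf1d, hg0d, hg1d] at *
    field_simp
    ring
  · simp only [Prod.snd_add, Prod.smul_snd, smul_eq_mul]
    rw [ht, hs, hf0d, hf1d, hg0d, hg1d] at *
    field_simp
    ring

lemma edge_in_frontier {N : ℕ} (p : Fin N → ℝ × ℝ) (a b : Fin N)
    (H : ∀ l, l ≠ a → l ≠ b → 0 < cr (p b - p a) (p l - p a))
    (hex : ∃ l, l ≠ a ∧ l ≠ b) :
    segment ℝ (p a) (p b) ⊆ frontier (convexHull ℝ (Set.range p)) := by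
  classical
  set K := convexHull ℝ (Set.range p) with hK
  set d : ℝ × ℝ := p b - p a with hd
  have hdne : d ≠ 0 := by
    obtain ⟨l, hla, hlb⟩ := hex
    intro h0
    have h := H l hla hlb
    rw [h0] at h
    simp [cr] at h
  set f : ℝ × ℝ → ℝ := fun x => cr d (x - p a) with hf
  have hflin : ∀ (α β : ℝ) (x y : ℝ × ℝ), α + β = 1 →
      f (α • x + β • y) = α * f x + β * f y := by
    intro α β x y hαβ
    simp only [hf, cr, Prod.fst_sub, Prod.snd_sub, Prod.fst_add, Prod.snd_add,
      Prod.smul_fst, Prod.smul_snd, smul_eq_mul]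
    have : β = 1 - α := by linarith
    subst this; ring
  have hfa : f (p a) = 0 := by simp [hf, cr]
  have hfb : f (p b) = 0 := by simp [hf, cr, hd]; ring
  have hKhalf : ∀ x ∈ K, 0 ≤ f x := by
    intro x hx
    have hsub : Set.range p ⊆ {y | 0 ≤ f y} := by
      rintro _ ⟨l, rfl⟩
      by_cases hla : l = a
      · subst hla; simp [hfa]
      by_cases hlb : l = b
      · subst hlb; simp [hfb]
      exact le_of_lt (H l hla hlb)
    have hconv : Convex ℝ {y : ℝ × ℝ | 0 ≤ f y} := by
      intro x hx y hy α β hα hβ hαβ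
      have := hflin α β x y hαβ
      simp only [Set.mem_setOf_eq] at *
      rw [this]
      have := mul_nonneg hα hx
      have := mul_nonneg hβ hy
      linarith
    exact convexHull_min hsub hconv hx
  have hKclosed : IsClosed K := (Set.finite_range p).isClosed_convexHull (𝕜 := ℝ)
  intro x hx
  have hxK : x ∈ K :=
    (convex_convexHull ℝ _).segment_subset
      (subset_convexHull ℝ _ (Set.mem_range_self a))
      (subset_convexHull ℝ _ (Set.mem_range_self b)) hx
  have hfx : f x = 0 := by
    obtain ⟨α, β, hα, hβ, hαβ, rfl⟩ := hx
    rw [hflin α β _ _ hαβ, hfa, hfb]; ring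
  rw [hKclosed.frontier_eq]
  refine ⟨hxK, ?_⟩
  intro hxint
  obtain ⟨ε, hε, hball⟩ := Metric.isOpen_iff.mp isOpen_interior x hxint
  set w : ℝ × ℝ := (-d.2, d.1) with hw
  have hwnorm : 0 < ‖w‖ := by
    rw [norm_pos_iff]
    intro h0
    apply hdne
    rw [hw, Prod.ext_iff] at h0
    simp at h0
    rw [hd] at *
    apply Prod.ext <;> simp [h0.1, h0.2]
  set δ : ℝ := ε / (2 * ‖w‖) with hδ
  have hδ0 : 0 < δ := by positivity
  have hy : x - δ • w ∈ K := by
    apply interior_subset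
    apply hball
    rw [Metric.mem_ball, dist_eq_norm]
    have : x - δ • w - x = -(δ • w) := by abel
    rw [this, norm_neg, norm_smul, Real.norm_eq_abs, abs_of_pos hδ0, hδ]
    rw [div_mul_eq_mul_div, mul_comm]
    rw [div_lt_iff₀ (by positivity)]
    nlinarith [hwnorm]
  have hfy : f (x - δ • w) = - δ * (d.1^2 + d.2^2) := by
    simp only [hf, cr, Prod.fst_sub, Prod.snd_sub, Prod.smul_fst, Prod.smul_snd,
      smul_eq_mul, hw]
    have hfx' : d.1 * (x.2 - (p a).2) - d.2 * (x.1 - (p a).1) = 0 := hfx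
    nlinarith [hfx']
  have hd1 : 0 < d.1^2 + d.2^2 := by
    by_cases h1 : d.1 = 0
    · have h2 : d.2 ≠ 0 := by
        intro h2; apply hdne; exact Prod.ext h1 h2
      positivity
    · positivity
  have := hKhalf _ hy
  rw [hfy] at this
  nlinarith

lemma cramer {u v w : ℝ × ℝ} (h : cr u v ≠ 0) :
    w = (cr w v / cr u v) • u + (cr u w / cr u v) • v := by
  simp only [cr] at *
  apply Prod.ext <;>
  · simp only [Prod.fst_add, Prod.snd_add, Prod.smul_fst, Prod.smul_snd, smul_eq_mul]
    rw [div_mul_eq_mul_div, div_mul_eq_mul_div, ← add_div, eq_div_iff h]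
    ring

lemma interior_hull_nonempty {N : ℕ} (p : Fin N → ℝ × ℝ) (i0 i1 i2 : Fin N)
    (h : cr (p i1 - p i0) (p i2 - p i0) ≠ 0) :
    (interior (convexHull ℝ (Set.range p))).Nonempty := by
  rw [interior_convexHull_nonempty_iff_affineSpan_eq_top]
  rw [eq_top_iff]
  intro x _
  have h0 : p i0 ∈ affineSpan ℝ (Set.range p) := subset_affineSpan ℝ _ (Set.mem_range_self i0)
  have h1 : p i1 ∈ affineSpan ℝ (Set.range p) := subset_affineSpan ℝ _ (Set.mem_range_self i1)
  have h2 : p i2 ∈ affineSpan ℝ (Set.range p) := subset_affineSpan ℝ _ (Set.mem_range_self i2)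
  have hv1 : p i1 - p i0 ∈ (affineSpan ℝ (Set.range p)).direction :=
    AffineSubspace.vsub_mem_direction h1 h0
  have hv2 : p i2 - p i0 ∈ (affineSpan ℝ (Set.range p)).direction :=
    AffineSubspace.vsub_mem_direction h2 h0
  have hx : x = ((cr (x - p i0) (p i2 - p i0) / cr (p i1 - p i0) (p i2 - p i0)) •
        (p i1 - p i0) + (cr (p i1 - p i0) (x - p i0) / cr (p i1 - p i0) (p i2 - p i0)) •
        (p i2 - p i0)) + p i0 := by
    have := cramer (w := x - p i0) h
    have h' : x - p i0 + p i0 = x := by abel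
    rw [← this, h']
  rw [hx]
  have hmem : ((cr (x - p i0) (p i2 - p i0) / cr (p i1 - p i0) (p i2 - p i0)) •
        (p i1 - p i0) + (cr (p i1 - p i0) (x - p i0) / cr (p i1 - p i0) (p i2 - p i0)) •
        (p i2 - p i0)) ∈ (affineSpan ℝ (Set.range p)).direction :=
    Submodule.add_mem _ (Submodule.smul_mem _ _ hv1) (Submodule.smul_mem _ _ hv2)
  exact AffineSubspace.vadd_mem_of_mem_direction hmem h0

lemma not_in_frontier {s : Set (ℝ × ℝ)} (hs : Convex ℝ s)
    {z : ℝ × ℝ} (hz : z ∈ interior s)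
    {A B C D X : ℝ × ℝ} (hA : A ∈ s) (hB : B ∈ s) (hC : C ∈ s) (hD : D ∈ s)
    (hX1 : X ∈ openSegment ℝ A C) (hX2 : X ∈ openSegment ℝ B D)
    (hnc : cr (C - A) (B - A) ≠ 0) :
    X ∉ frontier s := by
  intro hXf
  have hXni : X ∉ interior s := by
    rw [frontier] at hXf
    exact hXf.2
  obtain ⟨f, hf⟩ := geometric_hahn_banach_open_point (hs.interior) isOpen_interior hXni
  have hle : ∀ y ∈ s, f y ≤ f X := by
    intro y hy
    by_contra hgt
    push_neg at hgt
    have hfz : f z < f X := hf z hz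
    set t : ℝ := ((f X - f z) / (f y - f z) + 1) / 2 with htdef
    have h1 : 0 < f y - f z := by linarith
    have ht0 : (f X - f z) / (f y - f z) < t := by
      rw [htdef]
      have : (f X - f z) / (f y - f z) < 1 := by
        rw [div_lt_one h1]; linarith
      linarith
    have ht1 : t < 1 := by
      rw [htdef]
      have : (f X - f z) / (f y - f z) < 1 := by
        rw [div_lt_one h1]; linarith
      linarith
    have htpos : 0 < t := by
      rw [htdef]
      have : 0 < (f X - f z) / (f y - f z) := div_pos (by linarith) h1
      linarith
    have hmem : (1 - t) • z + t • y ∈ interior s :=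
      hs.combo_interior_closure_mem_interior hz (subset_closure hy) (by linarith) (by linarith)
        (by ring)
    have := hf _ hmem
    rw [map_add, map_smul, map_smul] at this
    simp only [smul_eq_mul] at this
    have hcontra : f X - f z < t * (f y - f z) := by
      rw [div_lt_iff₀ h1] at ht0
      linarith
    nlinarith
  have hcombo : ∀ P Q : ℝ × ℝ, P ∈ s → Q ∈ s → X ∈ openSegment ℝ P Q →
      f P = f X ∧ f Q = f X := by
    intro P Q hP hQ hX
    obtain ⟨α, β, hα, hβ, hαβ, hXeq⟩ := hX
    have hfX : f X = α * f P + β * f Q := by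
      rw [← hXeq, map_add, map_smul, map_smul]; simp
    have h1 := hle P hP
    have h2 := hle Q hQ
    have hXX : α * f X + β * f X = f X := by linear_combination (f X) * hαβ
    constructor
    · by_contra hne
      have hlt : f P < f X := lt_of_le_of_ne h1 hne
      have ha : α * f P < α * f X := mul_lt_mul_of_pos_left hlt hα
      have hb : β * f Q ≤ β * f X := mul_le_mul_of_nonneg_left h2 hβ.le
      linarith
    · by_contra hne
      have hlt : f Q < f X := lt_of_le_of_ne h2 hne
      have hb : β * f Q < β * f X := mul_lt_mul_of_pos_left hlt hβ
      have ha : α * f P ≤ α * f X := mul_le_mul_of_nonneg_left h1 hα.le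
      linarith
  obtain ⟨hfA, hfC⟩ := hcombo A C hA hC hX1
  obtain ⟨hfB, hfD⟩ := hcombo B D hB hD hX2
  have hfz : f z < f X := hf z hz
  have hCA : f (C - A) = 0 := by rw [map_sub]; rw [hfA, hfC]; ring
  have hBA : f (B - A) = 0 := by rw [map_sub]; rw [hfA, hfB]; ring
  have hzA := cramer (w := z - A) hnc
  have : f (z - A) = 0 := by
    rw [hzA, map_add, map_smul, map_smul, hCA, hBA]
    simp
  rw [map_sub] at this
  rw [hfA] at this
  linarith

end BipartiteAux

/-- `m` red and `n` blue points on a circle, in convex position, with the red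
points (indices `< m`) consecutive in the circular order. The straight-line
drawing of the complete bipartite graph between red and blue points has exactly
2 edges on the convex hull boundary, and any plane (crossing-free) subset of its
edges has cardinality at most `m + n - 1`. -/
theorem bipartite_convex_plane_subdrawing_bound (m n : ℕ) (hm : 1 ≤ m) (hn : 1 ≤ n)
    (hmn : 3 ≤ m + n)
    (p : Fin (m + n) → ℝ × ℝ) (c : ℝ × ℝ) (ρ : ℝ) (hρ : 0 < ρ)
    (θ : Fin (m + n) → ℝ) (hθmono : StrictMono θ)
    (hθrange : ∀ i, θ i ∈ Set.Ico 0 (2 * π))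
    (hp : ∀ i, p i = (c.1 + ρ * cos (θ i), c.2 + ρ * sin (θ i))) :
    -- exactly two bichromatic edges lie on the convex hull boundary
    ((Finset.univ.filter (fun e : Fin (m + n) × Fin (m + n) =>
        e.1.val < m ∧ m ≤ e.2.val ∧
        segment ℝ (p e.1) (p e.2) ⊆ frontier (convexHull ℝ (Set.range p)))).card = 2)
    ∧
    -- any crossing-free set of bichromatic edges has at most m+n-1 elements
    (∀ E : Finset (Fin (m + n) × Fin (m + n)),
      (∀ e ∈ E, e.1.val < m ∧ m ≤ e.2.val) →
      (∀ e ∈ E, ∀ f ∈ E, e ≠ f →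
        openSegment ℝ (p e.1) (p e.2) ∩ openSegment ℝ (p f.1) (p f.2) = ∅) →
      E.card ≤ m + n - 1) := by
  classical
  have hπ := Real.pi_pos
  -- basic orientation facts
  have h_abc : ∀ a b l : Fin (m + n), a < b → b < l → cr (p l - p a) (p b - p a) < 0 := by
    intro a b l hab hbl
    rw [hp a, hp b, hp l]
    exact cross_circle c hρ (hθmono hab) (hθmono hbl)
      (by have h1 := (hθrange l).2; have h2 := (hθrange a).1; linarith)
  have h_wrap : ∀ a b l : Fin (m + n), l < a → a < b → cr (p l - p a) (p b - p a) < 0 := by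
    intro a b l hla hab
    have key := cross_circle c hρ (α := θ a) (β := θ b) (γ := θ l + 2*π) (hθmono hab)
      (by have h1 := (hθrange b).2; have h2 := (hθrange l).1; linarith)
      (by have := hθmono hla; linarith)
    simp only [Real.cos_add_two_pi, Real.sin_add_two_pi] at key
    rw [hp a, hp b, hp l]
    exact key
  have h_wrap2 : ∀ a b l : Fin (m + n), b < l → l < a → cr (p l - p a) (p b - p a) < 0 := by
    intro a b l hbl hla
    have key := cross_circle c hρ (α := θ a) (β := θ b + 2*π) (γ := θ l + 2*π)
      (by have h1 := (hθrange a).2; have h2 := (hθrange b).1; linarith)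
      (by have := hθmono hbl; linarith)
      (by have := hθmono hla; linarith)
    simp only [Real.cos_add_two_pi, Real.sin_add_two_pi] at key
    rw [hp a, hp b, hp l]
    exact key
  -- crossing chords
  have hcross : ∀ a b c' d : Fin (m + n), a < b → b < c' → c' < d →
      ∃ X, X ∈ openSegment ℝ (p a) (p c') ∩ openSegment ℝ (p b) (p d) := by
    intro a b c' d hab hbc hcd
    apply segments_cross
    · exact h_abc a b c' hab hbc
    · rw [cr_swap]
      exact neg_pos.mpr (h_abc a c' d (lt_trans hab hbc) hcd)
    · rw [cr_swap]
      exact neg_pos.mpr (h_wrap b d a hab (lt_trans hbc hcd))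
    · exact h_abc b c' d hbc hcd
  -- interior of hull nonempty
  have i0 : Fin (m + n) := ⟨0, by omega⟩
  have hz : (interior (convexHull ℝ (Set.range p))).Nonempty := by
    refine interior_hull_nonempty p ⟨0, by omega⟩ ⟨1, by omega⟩ ⟨2, by omega⟩ ?_
    have := h_abc ⟨0, by omega⟩ ⟨1, by omega⟩ ⟨2, by omega⟩
      (by rw [Fin.mk_lt_mk]; omega) (by rw [Fin.mk_lt_mk]; omega)
    rw [cr_swap] at this
    intro h0
    rw [h0] at this
    simp at this
  obtain ⟨z, hzint⟩ := hz
  have hKconv : Convex ℝ (convexHull ℝ (Set.range p)) := convex_convexHull ℝ _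
  have hmemK : ∀ i : Fin (m + n), p i ∈ convexHull ℝ (Set.range p) :=
    fun i => subset_convexHull ℝ _ (Set.mem_range_self i)
  -- a nonadjacent bichromatic edge is not entirely on the frontier
  have h_not_frontier : ∀ e : Fin (m + n) × Fin (m + n),
      (e.1 : ℕ) < m → m ≤ (e.2 : ℕ) → (e.1 : ℕ) + 1 < (e.2 : ℕ) →
      ¬((e.1 : ℕ) = 0 ∧ (e.2 : ℕ) = m + n - 1) →
      ¬(segment ℝ (p e.1) (p e.2) ⊆ frontier (convexHull ℝ (Set.range p))) := by
    intro e h1 h2 h3 h4 hseg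
    have h2e : (e.2 : ℕ) < m + n := e.2.isLt
    by_cases h0 : (e.1 : ℕ) = 0
    · -- quadruple (e.1, e.1+1, e.2, last)
      have hlast : (e.2 : ℕ) < m + n - 1 := by omega
      set b : Fin (m + n) := ⟨(e.1 : ℕ) + 1, by omega⟩ with hb
      set d : Fin (m + n) := ⟨m + n - 1, by omega⟩ with hd
      obtain ⟨X, hX1, hX2⟩ := hcross e.1 b e.2 d
        (by rw [Fin.lt_def]; simp [hb]) (by rw [Fin.lt_def]; simp [hb]; omega)
        (by rw [Fin.lt_def]; simp [hd]; omega)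
      have hXf : X ∈ frontier (convexHull ℝ (Set.range p)) :=
        hseg (openSegment_subset_segment ℝ _ _ hX1)
      exact not_in_frontier hKconv hzint (hmemK e.1) (hmemK b) (hmemK e.2) (hmemK d)
        hX1 hX2
        (ne_of_lt (h_abc e.1 b e.2 (by rw [Fin.lt_def]; simp [hb])
          (by rw [Fin.lt_def]; simp [hb]; omega)))
        hXf
    · -- quadruple (0, e.1, e.1+1, e.2)
      set a : Fin (m + n) := ⟨0, by omega⟩ with ha
      set b : Fin (m + n) := ⟨(e.1 : ℕ) + 1, by omega⟩ with hb
      obtain ⟨X, hX1, hX2⟩ := hcross a e.1 b e.2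
        (by rw [Fin.lt_def]; simp [ha]; omega) (by rw [Fin.lt_def]; simp [hb])
        (by rw [Fin.lt_def]; simp [hb]; omega)
      have hXf : X ∈ frontier (convexHull ℝ (Set.range p)) :=
        hseg (openSegment_subset_segment ℝ _ _ hX2)
      exact not_in_frontier hKconv hzint (hmemK a) (hmemK e.1) (hmemK b) (hmemK e.2)
        hX1 hX2
        (ne_of_lt (h_abc a e.1 b (by rw [Fin.lt_def]; simp [ha]; omega)
          (by rw [Fin.lt_def]; simp [hb]))) hXf
  constructor
  · -- exactly two hull edges
    set eL : Fin (m + n) × Fin (m + n) := (⟨m - 1, by omega⟩, ⟨m, by omega⟩) with heL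
    set eR : Fin (m + n) × Fin (m + n) := (⟨0, by omega⟩, ⟨m + n - 1, by omega⟩) with heR
    have hLR : eL ≠ eR := by
      simp only [heL, heR, Ne, Prod.mk.injEq, Fin.mk.injEq, not_and]
      omega
    have hset : (Finset.univ.filter (fun e : Fin (m + n) × Fin (m + n) =>
        e.1.val < m ∧ m ≤ e.2.val ∧
        segment ℝ (p e.1) (p e.2) ⊆ frontier (convexHull ℝ (Set.range p)))) = {eL, eR} := by
      ext e
      simp only [Finset.mem_filter, Finset.mem_univ, true_and, Finset.mem_insert,
        Finset.mem_singleton]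
      constructor
      · rintro ⟨h1, h2, hseg⟩
        have h2e : (e.2 : ℕ) < m + n := e.2.isLt
        by_cases hc1 : (e.2 : ℕ) = (e.1 : ℕ) + 1
        · left
          rw [heL, Prod.ext_iff, Fin.ext_iff, Fin.ext_iff]
          constructor <;> simp <;> omega
        by_cases hc2 : (e.1 : ℕ) = 0 ∧ (e.2 : ℕ) = m + n - 1
        · right
          rw [heR, Prod.ext_iff, Fin.ext_iff, Fin.ext_iff]
          constructor <;> simp <;> omega
        exfalso
        exact h_not_frontier e h1 h2 (by omega) hc2 hseg
      · rintro (rfl | rfl)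
        · refine ⟨by simp [heL]; omega, by simp [heL], ?_⟩
          apply edge_in_frontier
          · intro l hl1 hl2
            have hl1' : (l : ℕ) ≠ m - 1 := by
              intro h; apply hl1; rw [heL]; exact Fin.ext h
            have hl2' : (l : ℕ) ≠ m := by
              intro h; apply hl2; rw [heL]; exact Fin.ext h
            have hll : (l : ℕ) < m + n := l.isLt
            rcases lt_or_gt_of_ne hl1' with hlt | hgt
            · rw [cr_swap]
              refine neg_pos.mpr (h_wrap _ _ _ ?_ ?_) <;> rw [Fin.lt_def] <;> simp [heL] <;> omega
            · rw [cr_swap]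
              refine neg_pos.mpr (h_abc _ _ _ ?_ ?_) <;> rw [Fin.lt_def] <;> simp [heL] <;> omega
          · obtain ⟨lv, hv1, hv2, hv3⟩ : ∃ lv : ℕ, lv < m + n ∧ lv ≠ m - 1 ∧ lv ≠ m := by
              refine ⟨if m = 1 then 2 else 0, ?_⟩
              split_ifs <;> omega
            exact ⟨⟨lv, hv1⟩, by simp [heL, Fin.ext_iff]; omega, by simp [heL, Fin.ext_iff]; omega⟩
        · refine ⟨by simp [heR]; omega, by simp [heR]; omega, ?_⟩
          rw [show segment ℝ (p eR.1) (p eR.2) = segment ℝ (p eR.2) (p eR.1) from segment_symm ℝ _ _]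
          apply edge_in_frontier
          · intro l hl1 hl2
            have hl1' : (l : ℕ) ≠ m + n - 1 := by
              intro h; apply hl1; rw [heR]; exact Fin.ext h
            have hl2' : (l : ℕ) ≠ 0 := by
              intro h; apply hl2; rw [heR]; exact Fin.ext h
            have hll : (l : ℕ) < m + n := l.isLt
            rw [cr_swap]
            refine neg_pos.mpr (h_wrap2 _ _ _ ?_ ?_) <;> rw [Fin.lt_def] <;> simp [heR] <;> omega
          · refine ⟨⟨1, by omega⟩, ?_, ?_⟩ <;> simp [heR, Fin.ext_iff] <;> omega
    rw [hset, Finset.card_insert_of_notMem (by simp [hLR]), Finset.card_singleton]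
  · -- crossing-free bound
    intro E hEcol hEcross
    have hinj : Set.InjOn (fun e : Fin (m + n) × Fin (m + n) =>
        (e.1 : ℕ) + (m + n - 1 - (e.2 : ℕ))) E := by
      intro e he f hf heq
      simp only at heq
      by_contra hne
      obtain ⟨he1, he2⟩ := hEcol e he
      obtain ⟨hf1, hf2⟩ := hEcol f hf
      have h2e : (e.2 : ℕ) < m + n := e.2.isLt
      have h2f : (f.2 : ℕ) < m + n := f.2.isLt
      rcases lt_trichotomy (e.1 : ℕ) (f.1 : ℕ) with h | h | h
      · have hj : (e.2 : ℕ) < (f.2 : ℕ) := by omega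
        obtain ⟨X, hX1, hX2⟩ := hcross e.1 f.1 e.2 f.2
          (by rwa [Fin.lt_def]) (by rw [Fin.lt_def]; omega) (by rwa [Fin.lt_def])
        have := hEcross e he f hf hne
        have hmem : X ∈ openSegment ℝ (p e.1) (p e.2) ∩ openSegment ℝ (p f.1) (p f.2) :=
          ⟨hX1, hX2⟩
        rw [this] at hmem
        exact hmem
      · apply hne
        have h1 : e.1 = f.1 := Fin.ext h
        have h2 : e.2 = f.2 := Fin.ext (by omega)
        exact Prod.ext h1 h2
      · have hj : (f.2 : ℕ) < (e.2 : ℕ) := by omega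
        obtain ⟨X, hX1, hX2⟩ := hcross f.1 e.1 f.2 e.2
          (by rwa [Fin.lt_def]) (by rw [Fin.lt_def]; omega) (by rwa [Fin.lt_def])
        have := hEcross f hf e he (Ne.symm hne)
        have hmem : X ∈ openSegment ℝ (p f.1) (p f.2) ∩ openSegment ℝ (p e.1) (p e.2) :=
          ⟨hX1, hX2⟩
        rw [this] at hmem
        exact hmem
    calc E.card = (E.image (fun e : Fin (m + n) × Fin (m + n) =>
        (e.1 : ℕ) + (m + n - 1 - (e.2 : ℕ)))).card := (Finset.card_image_of_injOn hinj).symm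
      _ ≤ (Finset.range (m + n - 1)).card := by
          apply Finset.card_le_card
          intro x hx
          rw [Finset.mem_image] at hx
          obtain ⟨e, he, rfl⟩ := hx
          obtain ⟨he1, he2⟩ := hEcol e he
          have h2e : (e.2 : ℕ) < m + n := e.2.isLt
          rw [Finset.mem_range]
          omega
      _ = m + n - 1 := Finset.card_range _
end

section
/- For any finite set of points in the plane in general position, partitioned into nonempty red and blue classes, the straight-line drawing of the complete bipartite graph between the classes contains a crossing-free spanning tree. -/
open SimpleGraph in
theorem aux_parent_isTree {V : Type*} [Fintype V] (par : V → V) (rank : V → ℕ) (r : V)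
    (hpr : par r = r) (hrk : ∀ v, v ≠ r → rank (par v) < rank v) :
    (SimpleGraph.fromRel fun i j => par i = j).IsTree := by
  classical
  set G := SimpleGraph.fromRel fun i j => par i = j with hG
  have hadj : ∀ {x y}, G.Adj x y ↔ x ≠ y ∧ (par x = y ∨ par y = x) := by
    intro x y; simp [hG, fromRel_adj]
  have hner : ∀ {x}, x ≠ r → par x ≠ x := by
    intro x hx h
    have := hrk x hx
    rw [h] at this; omega
  have hadj_par : ∀ {x}, x ≠ r → G.Adj x (par x) := by
    intro x hx
    exact hadj.2 ⟨fun h => hner hx h.symm, Or.inl rfl⟩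
  -- reachability to root
  have hreach : ∀ n (v : V), rank v ≤ n → G.Reachable v r := by
    intro n
    induction n with
    | zero =>
      intro v hv
      by_cases h : v = r
      · exact h ▸ Reachable.refl _
      · exact absurd (hrk v h) (by omega)
    | succ n ih =>
      intro v hv
      by_cases h : v = r
      · exact h ▸ Reachable.refl _
      · exact (hadj_par h).reachable.trans (ih (par v) (by have := hrk v h; omega))
  constructor
  · have : Nonempty V := ⟨r⟩
    exact Connected.mk (fun u v => ((hreach _ u le_rfl).trans (hreach _ v le_rfl).symm))
  · -- acyclic
    intro v c hc
    -- child of a dart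
    let ch : G.Dart → V := fun d => if par d.toProd.1 = d.toProd.2 then d.toProd.1 else d.toProd.2
    have hch_ne : ∀ d : G.Dart, ch d ≠ r := by
      intro d hd
      rcases hadj.1 d.adj with ⟨hne, hor⟩
      by_cases h' : par d.toProd.1 = d.toProd.2
      · simp only [ch, if_pos h'] at hd
        apply hne
        rw [← h', hd, hpr]
      · have h : par d.toProd.2 = d.toProd.1 := hor.resolve_left h'
        simp only [ch, if_neg h'] at hd
        apply hne
        rw [← h, hd, hpr]
    have hch_edge : ∀ d : G.Dart, d.edge = s(ch d, par (ch d)) := by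
      intro d
      rcases hadj.1 d.adj with ⟨hne, hor⟩
      by_cases h' : par d.toProd.1 = d.toProd.2
      · simp only [ch, if_pos h']
        rw [h']
        rfl
      · have h : par d.toProd.2 = d.toProd.1 := hor.resolve_left h'
        simp only [ch, if_neg h']
        rw [h]
        show s(d.toProd.1, d.toProd.2) = _
        rw [Sym2.eq_swap]
    have hch_other : ∀ d : G.Dart, par (ch d) ∈ ({d.toProd.1, d.toProd.2} : Set V) ∧
        ch d ∈ ({d.toProd.1, d.toProd.2} : Set V) := by
      intro d
      rcases hadj.1 d.adj with ⟨hne, hor⟩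
      by_cases h' : par d.toProd.1 = d.toProd.2
      · simp only [ch, if_pos h', h']; exact ⟨Or.inr rfl, Or.inl rfl⟩
      · have h : par d.toProd.2 = d.toProd.1 := hor.resolve_left h'
        simp only [ch, if_neg h', h]; exact ⟨Or.inl rfl, Or.inr rfl⟩
    set L : List V := c.darts.map ch with hL
    have hedges : c.edges = L.map (fun x => s(x, par x)) := by
      rw [hL, List.map_map, Walk.edges]
      exact List.map_congr_left (fun d _ => hch_edge d)
    have hnodupL : L.Nodup := by
      have := hc.edges_nodup
      rw [hedges] at this
      exact this.of_map _
    have hsubL : ∀ x ∈ L, x ∈ c.support.tail := by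
      -- need: all dart endpoints are in support.tail
      intro x hx
      rcases List.mem_map.1 hx with ⟨d, hd, rfl⟩
      have hmem : ch d ∈ c.support := by
        rcases (hch_other d).2 with h | h
        · rw [h]; exact Walk.dart_fst_mem_support_of_mem_darts _ hd
        · rw [h]; exact Walk.dart_snd_mem_support_of_mem_darts _ hd
      rw [c.support_eq_cons] at hmem
      rcases List.mem_cons.1 hmem with h | h
      · -- ch d = v : need v ∈ tail
        cases c with
        | nil => simp at hd
        | cons ha q =>
          subst h
          simpa using q.end_mem_support
      · exact h
    have hlenL : L.length = c.support.tail.length := by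
      simp [hL, Walk.length_support]
    have htailnodup : c.support.tail.Nodup := hc.2
    have hfin : L.toFinset = c.support.tail.toFinset := by
      apply Finset.eq_of_subset_of_card_le
      · intro x hx
        rw [List.mem_toFinset] at hx
        exact List.mem_toFinset.2 (hsubL x hx)
      · rw [List.toFinset_card_of_nodup hnodupL, List.toFinset_card_of_nodup htailnodup, hlenL]
    have hsupL : ∀ x ∈ c.support.tail, x ∈ L := by
      intro x hx
      have := hfin ▸ List.mem_toFinset.2 hx
      exact List.mem_toFinset.1 this
    -- L nonempty
    have hLne : L ≠ [] := by
      have h3 := hc.three_le_length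
      intro h
      rw [hL] at h
      have : c.darts.length = 0 := by simpa using congrArg List.length h
      rw [Walk.length_darts] at this
      omega
    -- minimal rank element
    obtain ⟨m, hmL, hmin⟩ := L.toFinset.exists_min_image rank
      ((List.toFinset_nonempty_iff L).2 hLne)
    rw [List.mem_toFinset] at hmL
    have hmin' : ∀ x ∈ L, rank m ≤ rank x := fun x hx => hmin x (List.mem_toFinset.2 hx)
    rcases List.mem_map.1 hmL with ⟨d, hd, rfl⟩
    -- par (ch d) in support
    have hparmem : par (ch d) ∈ c.support := by
      rcases (hch_other d).1 with h | h
      · rw [h]; exact Walk.dart_fst_mem_support_of_mem_darts _ hd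
      · rw [h]; exact Walk.dart_snd_mem_support_of_mem_darts _ hd
    have hparmemtail : par (ch d) ∈ c.support.tail := by
      rw [c.support_eq_cons] at hparmem
      rcases List.mem_cons.1 hparmem with h | h
      · cases c with
        | nil => simp at hd
        | cons ha q =>
          subst h
          simpa using q.end_mem_support
      · exact h
    have hparL : par (ch d) ∈ L := hsupL _ hparmemtail
    have h1 := hmin' _ hparL
    have h2 := hrk (ch d) (hch_ne d)
    omega

/-- Linear functional used to order points. -/
def Ffn (a : ℝ) (o x : ℝ × ℝ) : ℝ := (x - o).1 + a * (x - o).2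

/-- Projective slope coordinate. -/
noncomputable def Ttn (a : ℝ) (o x : ℝ × ℝ) : ℝ := (x - o).2 / Ffn a o x

theorem aux_Ffn_self (a : ℝ) (o : ℝ × ℝ) : Ffn a o o = 0 := by
  simp [Ffn]

theorem aux_det_collinear {x y z : ℝ × ℝ}
    (h : (y - x).1 * (z - x).2 - (y - x).2 * (z - x).1 = 0) :
    Collinear ℝ ({x, y, z} : Set (ℝ × ℝ)) := by
  rcases eq_or_ne y x with rfl | hyx
  · rw [Set.insert_comm, Set.insert_idem]
    exact collinear_pair ℝ _ _
  · have hu : y - x ≠ 0 := sub_ne_zero.2 hyx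
    have hz : ∃ c : ℝ, z - x = c • (y - x) := by
      by_cases h1 : (y - x).1 ≠ 0
      · refine ⟨(z - x).1 / (y - x).1, Prod.ext ?_ ?_⟩
        · simp only [Prod.smul_fst, smul_eq_mul]
          rw [div_mul_cancel₀ _ h1]
        · simp only [Prod.smul_snd, smul_eq_mul]
          rw [div_mul_eq_mul_div, eq_div_iff h1]
          linear_combination h
      · push_neg at h1
        have h2 : (y - x).2 ≠ 0 := fun h2 => hu (Prod.ext h1 h2)
        have h3 : (z - x).1 = 0 := by
          rw [h1] at h
          have h4 : (y - x).2 * (z - x).1 = 0 := by linarith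
          rcases mul_eq_zero.1 h4 with h5 | h5
          · exact absurd h5 h2
          · exact h5
        refine ⟨(z - x).2 / (y - x).2, Prod.ext ?_ ?_⟩
        · simp only [Prod.smul_fst, smul_eq_mul]
          rw [h1, mul_zero, h3]
        · simp only [Prod.smul_snd, smul_eq_mul]
          rw [div_mul_cancel₀ _ h2]
    obtain ⟨c, hc⟩ := hz
    apply (collinear_iff_of_mem (Set.mem_insert x _)).2
    refine ⟨y - x, ?_⟩
    intro q hq
    simp only [Set.mem_insert_iff, Set.mem_singleton_iff] at hq
    rcases hq with rfl | rfl | rfl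
    · exact ⟨0, by simp⟩
    · exact ⟨1, by simp⟩
    · refine ⟨c, ?_⟩
      show q = c • (y - x) + x
      rw [← hc]
      abel

theorem aux_segA (a : ℝ) (o u w : ℝ × ℝ) (hu : 0 < Ffn a o u) (hw : 0 < Ffn a o w)
    {x : ℝ × ℝ} (hx : x ∈ segment ℝ u w) :
    0 < Ffn a o x ∧
    (∀ c, Ttn a o u ≤ c → Ttn a o w ≤ c → Ttn a o x ≤ c) ∧
    (∀ c, c ≤ Ttn a o u → c ≤ Ttn a o w → c ≤ Ttn a o x) ∧
    (Ttn a o u ≠ Ttn a o w → Ttn a o x = Ttn a o u → x = u) ∧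
    (Ttn a o u ≠ Ttn a o w → Ttn a o x = Ttn a o w → x = w) := by
  rw [segment_eq_image] at hx
  obtain ⟨s, ⟨hs0, hs1⟩, hxe⟩ := hx
  have hFx : Ffn a o x = (1 - s) * Ffn a o u + s * Ffn a o w := by
    simp only [Ffn, ← hxe, Prod.fst_sub, Prod.snd_sub, Prod.fst_add, Prod.snd_add,
      Prod.smul_fst, Prod.smul_snd, smul_eq_mul]
    ring
  have hGx : (x - o).2 = (1 - s) * (u - o).2 + s * (w - o).2 := by
    simp only [← hxe, Prod.snd_sub, Prod.snd_add, Prod.smul_snd, smul_eq_mul]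
    ring
  have hFxpos : 0 < Ffn a o x := by
    rw [hFx]
    rcases lt_or_eq_of_le hs0 with h | h
    · nlinarith [mul_pos h hw, mul_nonneg (sub_nonneg.2 hs1) hu.le]
    · rw [← h]; simpa using hu
  have hGu : (u - o).2 = Ttn a o u * Ffn a o u := (div_mul_cancel₀ _ hu.ne').symm
  have hGw : (w - o).2 = Ttn a o w * Ffn a o w := (div_mul_cancel₀ _ hw.ne').symm
  have hGx' : Ttn a o x * Ffn a o x = (1 - s) * (Ttn a o u * Ffn a o u)
      + s * (Ttn a o w * Ffn a o w) := by
    rw [Ttn, div_mul_cancel₀ _ hFxpos.ne', hGx, hGu, hGw]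
  refine ⟨hFxpos, ?_, ?_, ?_, ?_⟩
  · intro c h1 h2
    have key : Ttn a o x * Ffn a o x ≤ c * Ffn a o x := by
      rw [hGx', hFx]
      nlinarith [mul_le_mul_of_nonneg_left (mul_le_mul_of_nonneg_right h1 hu.le)
          (sub_nonneg.2 hs1),
        mul_le_mul_of_nonneg_left (mul_le_mul_of_nonneg_right h2 hw.le) hs0]
    exact le_of_mul_le_mul_right key hFxpos
  · intro c h1 h2
    have key : c * Ffn a o x ≤ Ttn a o x * Ffn a o x := by
      rw [hGx', hFx]
      nlinarith [mul_le_mul_of_nonneg_left (mul_le_mul_of_nonneg_right h1 hu.le)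
          (sub_nonneg.2 hs1),
        mul_le_mul_of_nonneg_left (mul_le_mul_of_nonneg_right h2 hw.le) hs0]
    exact le_of_mul_le_mul_right key hFxpos
  · intro hne heq
    have h0 : s * (Ffn a o w * (Ttn a o w - Ttn a o u)) = 0 := by
      have := hGx'
      rw [heq, hFx] at this
      nlinarith [this]
    have hs : s = 0 := by
      rcases mul_eq_zero.1 h0 with h | h
      · exact h
      · rcases mul_eq_zero.1 h with h | h
        · exact absurd h hw.ne'
        · exact absurd (sub_eq_zero.1 h).symm hne
    rw [← hxe, hs]
    simp
  · intro hne heq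
    have h0 : (1 - s) * (Ffn a o u * (Ttn a o u - Ttn a o w)) = 0 := by
      have := hGx'
      rw [heq, hFx] at this
      nlinarith [this]
    have hs : s = 1 := by
      rcases mul_eq_zero.1 h0 with h | h
      · linarith [sub_eq_zero.1 h]
      · rcases mul_eq_zero.1 h with h | h
        · exact absurd h hu.ne'
        · exact absurd (sub_eq_zero.1 h) hne
    rw [← hxe, hs]
    simp

theorem aux_segB (a : ℝ) (o w : ℝ × ℝ) (hw : 0 < Ffn a o w)
    {x : ℝ × ℝ} (hx : x ∈ segment ℝ o w) :
    x = o ∨ (0 < Ffn a o x ∧ Ttn a o x = Ttn a o w) := by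
  rw [segment_eq_image] at hx
  obtain ⟨s, ⟨hs0, hs1⟩, hxe⟩ := hx
  have hsub : x - o = s • (w - o) := by
    rw [← hxe]
    apply Prod.ext <;> simp [smul_eq_mul] <;> ring
  rcases eq_or_lt_of_le hs0 with h | h
  · left
    rw [← hxe, ← h]
    simp
  · right
    have hFx : Ffn a o x = s * Ffn a o w := by
      simp only [Ffn, hsub, Prod.fst_sub, Prod.snd_sub, Prod.smul_fst, Prod.smul_snd,
        smul_eq_mul]
      ring
    constructor
    · rw [hFx]; exact mul_pos h hw
    · rw [Ttn, Ttn, hFx, hsub]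
      rw [Prod.smul_snd, smul_eq_mul, mul_div_mul_left _ _ h.ne']

/-- For any finite set of points in the plane in general position, partitioned
into nonempty red and blue classes, the straight-line drawing of the complete
bipartite graph between the classes contains a crossing-free spanning tree.
(`color i = true` means red.) -/
theorem bipartite_straightline_plane_spanning_tree (N : ℕ)
    (p : Fin N → ℝ × ℝ) (hinj : Function.Injective p)
    (color : Fin N → Bool)
    (hred : ∃ i, color i = true) (hblue : ∃ i, color i = false)
    (hgp : ∀ i j k : Fin N, i ≠ j → j ≠ k → i ≠ k →
      ¬ Collinear ℝ ({p i, p j, p k} : Set (ℝ × ℝ))) :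
    ∃ T : SimpleGraph (Fin N), T.IsTree ∧
      (∀ i j, T.Adj i j → color i ≠ color j) ∧
      (∀ i j k l, T.Adj i j → T.Adj k l → ({i, j} : Set (Fin N)) ≠ {k, l} →
        segment ℝ (p i) (p j) ∩ segment ℝ (p k) (p l) ⊆
          p '' (({i, j} : Set (Fin N)) ∩ ({k, l} : Set (Fin N)))) := by
  classical
  -- choose a generic direction
  obtain ⟨a, hax⟩ : ∃ a : ℝ, ∀ i j : Fin N, i ≠ j →
      (p i).1 + a * (p i).2 ≠ (p j).1 + a * (p j).2 := by
    obtain ⟨a, ha⟩ := Infinite.exists_notMem_finset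
      ((Finset.univ ×ˢ Finset.univ : Finset (Fin N × Fin N)).image
        (fun ij => -((p ij.1).1 - (p ij.2).1) / ((p ij.1).2 - (p ij.2).2)))
    refine ⟨a, fun i j hij heq => ?_⟩
    by_cases h2 : (p i).2 = (p j).2
    · have h1 : (p i).1 = (p j).1 := by rw [h2] at heq; linarith
      exact hij (hinj (Prod.ext h1 h2))
    · apply ha
      apply Finset.mem_image.2
      refine ⟨(i, j), by simp, ?_⟩
      have h2' : (p i).2 - (p j).2 ≠ 0 := sub_ne_zero.2 h2
      rw [div_eq_iff h2']
      linarith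
  -- the root: minimizer of the functional
  obtain ⟨i0, hi0⟩ := hred
  obtain ⟨r, -, hrmin⟩ := Finset.exists_min_image (Finset.univ : Finset (Fin N))
    (fun i => (p i).1 + a * (p i).2) ⟨i0, Finset.mem_univ _⟩
  have hF : ∀ i, i ≠ r → 0 < Ffn a (p r) (p i) := by
    intro i hi
    have h1 := hrmin i (Finset.mem_univ i)
    have h2 := hax r i (Ne.symm hi)
    have h3 : (p r).1 + a * (p r).2 < (p i).1 + a * (p i).2 := lt_of_le_of_ne h1 h2
    simp only [Ffn, Prod.fst_sub, Prod.snd_sub]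
    nlinarith [h3]
  have hdet : ∀ i j k : Fin N, i ≠ j → j ≠ k → i ≠ k →
      (p j - p i).1 * (p k - p i).2 - (p j - p i).2 * (p k - p i).1 ≠ 0 :=
    fun i j k h1 h2 h3 h => hgp i j k h1 h2 h3 (aux_det_collinear h)
  have htinj : ∀ i j, i ≠ r → j ≠ r → i ≠ j →
      Ttn a (p r) (p i) ≠ Ttn a (p r) (p j) := by
    intro i j hi hj hij h
    apply hdet r i j (Ne.symm hi) hij (Ne.symm hj)
    have hFi := hF i hi
    have hFj := hF j hj
    rw [Ttn, Ttn, div_eq_div_iff hFi.ne' hFj.ne'] at h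
    simp only [Ffn, Prod.fst_sub, Prod.snd_sub] at h ⊢
    linear_combination -h
  -- a point of the opposite color exists
  have hO : ∃ b : Fin N, color b ≠ color r := by
    cases hcr : color r
    · exact ⟨i0, by simp [hi0, hcr]⟩
    · obtain ⟨i, hi⟩ := hblue
      exact ⟨i, by simp [hi, hcr]⟩
  -- the attachment point β q for q of the root's color
  have hβex : ∀ q : Fin N, ∃ b : Fin N, (q ≠ r ∧ color q = color r) →
      color b ≠ color r ∧
      ((Ttn a (p r) (p b) < Ttn a (p r) (p q) ∧
          ∀ b', color b' ≠ color r → Ttn a (p r) (p b') < Ttn a (p r) (p q) →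
            Ttn a (p r) (p b') ≤ Ttn a (p r) (p b)) ∨
       ((∀ b', color b' ≠ color r → Ttn a (p r) (p q) < Ttn a (p r) (p b')) ∧
          ∀ b', color b' ≠ color r → Ttn a (p r) (p b) ≤ Ttn a (p r) (p b'))) := by
    intro q
    by_cases hq : q ≠ r ∧ color q = color r
    · obtain ⟨hq1, hq2⟩ := hq
      have hOne : (Finset.univ.filter (fun b => color b ≠ color r)).Nonempty := by
        obtain ⟨b, hb⟩ := hO
        exact ⟨b, Finset.mem_filter.2 ⟨Finset.mem_univ _, hb⟩⟩
      by_cases h1 : ((Finset.univ.filter (fun b => color b ≠ color r)).filter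
          (fun b => Ttn a (p r) (p b) < Ttn a (p r) (p q))).Nonempty
      · obtain ⟨b, hb, hbmax⟩ := Finset.exists_max_image _ (fun b => Ttn a (p r) (p b)) h1
        rw [Finset.mem_filter, Finset.mem_filter] at hb
        refine ⟨b, fun _ => ⟨hb.1.2, Or.inl ⟨hb.2, fun b' h1' h2' => hbmax b' ?_⟩⟩⟩
        exact Finset.mem_filter.2 ⟨Finset.mem_filter.2 ⟨Finset.mem_univ _, h1'⟩, h2'⟩
      · obtain ⟨b, hb, hbmin⟩ := Finset.exists_min_image _ (fun b => Ttn a (p r) (p b)) hOne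
        rw [Finset.mem_filter] at hb
        refine ⟨b, fun _ => ⟨hb.2, Or.inr ⟨?_,
          fun b' h1' => hbmin b' (Finset.mem_filter.2 ⟨Finset.mem_univ _, h1'⟩)⟩⟩⟩
        intro b' h1'
        have hble : ¬ Ttn a (p r) (p b') < Ttn a (p r) (p q) := fun hlt =>
          h1 ⟨b', Finset.mem_filter.2 ⟨Finset.mem_filter.2 ⟨Finset.mem_univ _, h1'⟩, hlt⟩⟩
        have hb'r : b' ≠ r := fun h => h1' (by rw [h])
        have hb'q : b' ≠ q := fun h => h1' (by rw [h, hq2])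
        exact lt_of_le_of_ne (not_lt.1 hble) (htinj b' q hb'r hq1 hb'q).symm
    · exact ⟨r, fun h => absurd h hq⟩
  choose β hβ using hβex
  have hβspec := fun (q : Fin N) (h1 : q ≠ r) (h2 : color q = color r) => hβ q ⟨h1, h2⟩
  have hβopp : ∀ q, q ≠ r → color q = color r → color (β q) ≠ color r :=
    fun q h1 h2 => (hβspec q h1 h2).1
  have hβner : ∀ q, q ≠ r → color q = color r → β q ≠ r := by
    intro q h1 h2 h
    exact hβopp q h1 h2 (by rw [h])
  have hβneq : ∀ q, q ≠ r → color q = color r → β q ≠ q := by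
    intro q h1 h2 h
    exact hβopp q h1 h2 (by rw [h, h2])
  -- the parent map and rank
  set par : Fin N → Fin N :=
    fun i => if i = r then r else if color i = color r then β i else r with hpar
  set rank : Fin N → ℕ :=
    fun i => if i = r then 0 else if color i = color r then 2 else 1 with hrank
  have hparr : par r = r := by simp [hpar]
  have hpar_opp : ∀ i, i ≠ r → color i ≠ color r → par i = r := by
    intro i h1 h2; simp [hpar, h1, h2]
  have hpar_same : ∀ i, i ≠ r → color i = color r → par i = β i := by
    intro i h1 h2; simp [hpar, h1, h2]
  have hdecr : ∀ v, v ≠ r → rank (par v) < rank v := by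
    intro v hv
    by_cases hc : color v = color r
    · rw [hpar_same v hv hc]
      have h1 := hβner v hv hc
      have h2 := hβopp v hv hc
      simp [hrank, h1, h2, hv, hc]
    · rw [hpar_opp v hv hc]
      simp [hrank, hv, hc]
  have htree := aux_parent_isTree par rank r hparr hdecr
  refine ⟨SimpleGraph.fromRel (fun i j => par i = j), htree, ?_, ?_⟩
  · -- colors of adjacent vertices differ
    have hcol : ∀ i j : Fin N, i ≠ j → par i = j → color i ≠ color j := by
      intro i j hij hpij
      have hir : i ≠ r := by
        rintro rfl
        exact hij (hparr.symm.trans hpij)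
      by_cases hc : color i = color r
      · rw [hpar_same i hir hc] at hpij
        intro h
        apply hβopp i hir hc
        rw [hpij, ← h, hc]
      · rw [hpar_opp i hir hc] at hpij
        rw [← hpij]
        exact hc
    intro i j hAdj
    rw [SimpleGraph.fromRel_adj] at hAdj
    obtain ⟨hne, h | h⟩ := hAdj
    · exact hcol i j hne h
    · exact (hcol j i hne.symm h).symm
  · -- crossing-freeness
    -- interval facts for a non-star segment
    have hsegN : ∀ q, q ≠ r → color q = color r → ∀ x, x ∈ segment ℝ (p q) (p (β q)) →
        0 < Ffn a (p r) x ∧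
        (∀ c, Ttn a (p r) (p q) ≤ c → Ttn a (p r) (p (β q)) ≤ c → Ttn a (p r) x ≤ c) ∧
        (∀ c, c ≤ Ttn a (p r) (p q) → c ≤ Ttn a (p r) (p (β q)) → c ≤ Ttn a (p r) x) ∧
        (Ttn a (p r) x = Ttn a (p r) (p (β q)) → x = p (β q)) := by
      intro q h1 h2 x hx
      have hA := aux_segA a (p r) (p q) (p (β q)) (hF q h1) (hF (β q) (hβner q h1 h2)) hx
      have hne : Ttn a (p r) (p q) ≠ Ttn a (p r) (p (β q)) :=
        htinj q (β q) h1 (hβner q h1 h2) (Ne.symm (hβneq q h1 h2))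
      exact ⟨hA.1, hA.2.1, hA.2.2.1, fun h => hA.2.2.2.2 hne h⟩
    have hsegS : ∀ k, k ≠ r → ∀ x, x ∈ segment ℝ (p k) (p r) →
        x = p r ∨ (0 < Ffn a (p r) x ∧ Ttn a (p r) x = Ttn a (p r) (p k)) := by
      intro k h1 x hx
      rw [segment_symm] at hx
      exact aux_segB a (p r) (p k) (hF k h1) hx
    -- star-star
    have keySS : ∀ i k x, i ≠ r → k ≠ r → i ≠ k →
        x ∈ segment ℝ (p i) (p r) → x ∈ segment ℝ (p k) (p r) → x = p r := by
      intro i k x hi hk hik hx1 hx2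
      rcases hsegS i hi x hx1 with h | ⟨hpos1, ht1⟩
      · exact h
      rcases hsegS k hk x hx2 with h | ⟨hpos2, ht2⟩
      · exact h
      exact absurd (ht1.symm.trans ht2) (htinj i k hi hk hik)
    -- nonstar-star
    have keyNS : ∀ q k x, q ≠ r → k ≠ r → color q = color r → color k ≠ color r →
        x ∈ segment ℝ (p q) (p (β q)) → x ∈ segment ℝ (p k) (p r) →
        k = β q ∧ x = p (β q) := by
      intro q k x hq hk hcq hck hx1 hx2
      obtain ⟨hpos, hub, hlb, hend⟩ := hsegN q hq hcq x hx1
      rcases hsegS k hk x hx2 with rfl | ⟨-, htk⟩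
      · rw [aux_Ffn_self] at hpos
        exact absurd hpos (lt_irrefl 0)
      have hkq : k ≠ q := fun h => hck (h ▸ hcq)
      rcases (hβspec q hq hcq).2 with ⟨hlt, hmax⟩ | ⟨hall, hmin⟩
      · -- main case
        have h1 : Ttn a (p r) x ≤ Ttn a (p r) (p q) := hub _ le_rfl hlt.le
        have h2 : Ttn a (p r) (p (β q)) ≤ Ttn a (p r) x := hlb _ hlt.le le_rfl
        by_cases hkb : k = β q
        · exact ⟨hkb, hend (by rw [htk, hkb])⟩
        · exfalso
          rw [htk] at h1 h2
          by_cases hlt2 : Ttn a (p r) (p k) < Ttn a (p r) (p q)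
          · exact htinj k (β q) hk (hβner q hq hcq) hkb
              (le_antisymm (hmax k hck hlt2) h2)
          · exact htinj k q hk hq hkq (le_antisymm h1 (not_lt.1 hlt2))
      · -- fallback case
        have h0 : Ttn a (p r) (p q) < Ttn a (p r) (p (β q)) := hall _ (hβopp q hq hcq)
        have h1 : Ttn a (p r) x ≤ Ttn a (p r) (p (β q)) := hub _ h0.le le_rfl
        have h2 : Ttn a (p r) (p (β q)) ≤ Ttn a (p r) (p k) := hmin k hck
        rw [htk] at h1
        have hkb : k = β q := by
          by_contra hkb
          exact htinj k (β q) hk (hβner q hq hcq) hkb (le_antisymm h1 h2)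
        exact ⟨hkb, hend (by rw [htk, hkb])⟩
    -- nonstar-nonstar
    have keyNN : ∀ q q' x, q ≠ r → q' ≠ r → color q = color r → color q' = color r →
        q ≠ q' →
        x ∈ segment ℝ (p q) (p (β q)) → x ∈ segment ℝ (p q') (p (β q')) →
        β q = β q' ∧ x = p (β q) := by
      intro q q' x hq hq' hcq hcq' hqq' hx1 hx2
      obtain ⟨hpos, hub, hlb, hend⟩ := hsegN q hq hcq x hx1
      obtain ⟨hpos', hub', hlb', hend'⟩ := hsegN q' hq' hcq' x hx2
      have hbr := hβner q hq hcq
      have hbr' := hβner q' hq' hcq'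
      by_cases hbb : β q = β q'
      · refine ⟨hbb, ?_⟩
        rw [segment_eq_image] at hx1 hx2
        obtain ⟨s, ⟨hs0, hs1⟩, hxe⟩ := hx1
        obtain ⟨s', ⟨hs0', hs1'⟩, hxe'⟩ := hx2
        by_cases hs1e : s = 1
        · rw [← hxe, hs1e]; simp
        by_cases hs1e' : s' = 1
        · rw [← hxe', hs1e', hbb]; simp
        exfalso
        have h1 := congrArg Prod.fst hxe
        have h2 := congrArg Prod.fst hxe'
        have h3 := congrArg Prod.snd hxe
        have h4 := congrArg Prod.snd hxe'
        simp only [Prod.fst_add, Prod.snd_add, Prod.smul_fst, Prod.smul_snd,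
          smul_eq_mul, ← hbb] at h1 h2 h3 h4
        have e1 : (1 - s) * ((p q).1 - (p (β q)).1) = (1 - s') * ((p q').1 - (p (β q)).1) := by
          linear_combination h1 - h2
        have e2 : (1 - s) * ((p q).2 - (p (β q)).2) = (1 - s') * ((p q').2 - (p (β q)).2) := by
          linear_combination h3 - h4
        have hbq' : β q ≠ q' := fun h => hβopp q hq hcq (by rw [h, hcq'])
        apply hdet (β q) q q' (hβneq q hq hcq) hqq' hbq'
        have hsne : (1 : ℝ) - s ≠ 0 := sub_ne_zero.2 (Ne.symm hs1e)
        have hsne' : (1 : ℝ) - s' ≠ 0 := sub_ne_zero.2 (Ne.symm hs1e')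
        have key : ((1 - s) * (1 - s')) *
            ((p q - p (β q)).1 * (p q' - p (β q)).2 -
              (p q - p (β q)).2 * (p q' - p (β q)).1) = 0 := by
          simp only [Prod.fst_sub, Prod.snd_sub]
          linear_combination ((1 - s') * ((p q').2 - (p (β q)).2)) * e1 -
            ((1 - s') * ((p q').1 - (p (β q)).1)) * e2
        rcases mul_eq_zero.1 key with h | h
        · rcases mul_eq_zero.1 h with h' | h'
          · exact absurd h' hsne
          · exact absurd h' hsne'
        · exact h
      · exfalso
        have hτbb : Ttn a (p r) (p (β q)) ≠ Ttn a (p r) (p (β q'))  :=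
          htinj _ _ hbr hbr' hbb
        rcases (hβspec q hq hcq).2 with ⟨hlt, hmax⟩ | ⟨hall, hmin⟩ <;>
          rcases (hβspec q' hq' hcq').2 with ⟨hlt', hmax'⟩ | ⟨hall', hmin'⟩
        · -- both main
          rcases lt_or_gt_of_ne hτbb with hor | hor
          · have hno : ¬ Ttn a (p r) (p (β q')) < Ttn a (p r) (p q) := fun hh =>
              absurd (hmax _ (hβopp q' hq' hcq') hh) (not_le.2 hor)
            have hne2 : Ttn a (p r) (p (β q')) ≠ Ttn a (p r) (p q) :=
              htinj _ _ hbr' hq (fun h => hβopp q' hq' hcq' (by rw [h, hcq]))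
            have hgt : Ttn a (p r) (p q) < Ttn a (p r) (p (β q')) :=
              lt_of_le_of_ne (not_lt.1 hno) hne2.symm
            have hu1 : Ttn a (p r) x ≤ Ttn a (p r) (p q) := hub _ le_rfl hlt.le
            have hl2 : Ttn a (p r) (p (β q')) ≤ Ttn a (p r) x := hlb' _ hlt'.le le_rfl
            linarith
          · have hno : ¬ Ttn a (p r) (p (β q)) < Ttn a (p r) (p q') := fun hh =>
              absurd (hmax' _ (hβopp q hq hcq) hh) (not_le.2 hor)
            have hne2 : Ttn a (p r) (p (β q)) ≠ Ttn a (p r) (p q') :=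
              htinj _ _ hbr hq' (fun h => hβopp q hq hcq (by rw [h, hcq']))
            have hgt : Ttn a (p r) (p q') < Ttn a (p r) (p (β q)) :=
              lt_of_le_of_ne (not_lt.1 hno) hne2.symm
            have hu1 : Ttn a (p r) x ≤ Ttn a (p r) (p q') := hub' _ le_rfl hlt'.le
            have hl2 : Ttn a (p r) (p (β q)) ≤ Ttn a (p r) x := hlb _ hlt.le le_rfl
            linarith
        · -- q main, q' fallback
          have h1 : Ttn a (p r) (p (β q')) < Ttn a (p r) (p (β q)) :=
            lt_of_le_of_ne (hmin' _ (hβopp q hq hcq)) hτbb.symm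
          have hu2 : Ttn a (p r) x ≤ Ttn a (p r) (p (β q')) :=
            hub' _ (hall' _ (hβopp q' hq' hcq')).le le_rfl
          have hl1 : Ttn a (p r) (p (β q)) ≤ Ttn a (p r) x := hlb _ hlt.le le_rfl
          linarith
        · -- q fallback, q' main
          have h1 : Ttn a (p r) (p (β q)) < Ttn a (p r) (p (β q')) :=
            lt_of_le_of_ne (hmin _ (hβopp q' hq' hcq')) hτbb
          have hu2 : Ttn a (p r) x ≤ Ttn a (p r) (p (β q)) :=
            hub _ (hall _ (hβopp q hq hcq)).le le_rfl
          have hl1 : Ttn a (p r) (p (β q')) ≤ Ttn a (p r) x := hlb' _ hlt'.le le_rfl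
          linarith
        · -- both fallback
          exact hτbb (le_antisymm (hmin _ (hβopp q' hq' hcq')) (hmin' _ (hβopp q hq hcq)))
    -- assemble
    intro i j k l hTij hTkl hsets
    rw [SimpleGraph.fromRel_adj] at hTij hTkl
    obtain ⟨hne1, hor1⟩ := hTij
    obtain ⟨hne2, hor2⟩ := hTkl
    have hnorm : ∀ i j : Fin N, i ≠ j → (par i = j ∨ par j = i) →
        ∃ i', i' ≠ r ∧ ({i, j} : Set (Fin N)) = {i', par i'} ∧
          segment ℝ (p i) (p j) = segment ℝ (p i') (p (par i')) := by
      intro i j hij hor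
      rcases hor with h | h
      · refine ⟨i, ?_, by rw [h], by rw [h]⟩
        rintro rfl
        exact hij (hparr.symm.trans h)
      · refine ⟨j, ?_, by rw [h]; exact Set.pair_comm i j, by rw [h]; exact segment_symm ℝ _ _⟩
        rintro rfl
        exact hij (hparr.symm.trans h).symm
    obtain ⟨i', hi'r, hset1, hseg1⟩ := hnorm i j hne1 hor1
    obtain ⟨k', hk'r, hset2, hseg2⟩ := hnorm k l hne2 hor2
    rw [hset1, hset2] at hsets ⊢
    rw [hseg1, hseg2]
    have hik : i' ≠ k' := by
      rintro rfl
      exact hsets rfl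
    rintro x ⟨hx1, hx2⟩
    by_cases hci : color i' = color r <;> by_cases hck : color k' = color r
    · rw [hpar_same i' hi'r hci] at hx1 ⊢
      rw [hpar_same k' hk'r hck] at hx2 ⊢
      obtain ⟨hbb, hxe⟩ := keyNN i' k' x hi'r hk'r hci hck hik hx1 hx2
      exact ⟨β i', by simp [hbb], hxe.symm⟩
    · rw [hpar_same i' hi'r hci] at hx1 ⊢
      rw [hpar_opp k' hk'r hck] at hx2 ⊢
      obtain ⟨hkb, hxe⟩ := keyNS i' k' x hi'r hk'r hci hck hx1 hx2
      exact ⟨β i', by simp [hkb], hxe.symm⟩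
    · rw [hpar_opp i' hi'r hci] at hx1 ⊢
      rw [hpar_same k' hk'r hck] at hx2 ⊢
      obtain ⟨hkb, hxe⟩ := keyNS k' i' x hk'r hi'r hck hci hx2 hx1
      exact ⟨β k', by simp [hkb], hxe.symm⟩
    · rw [hpar_opp i' hi'r hci] at hx1 ⊢
      rw [hpar_opp k' hk'r hck] at hx2 ⊢
      have hxr := keySS i' k' x hi'r hk'r hik hx1 hx2
      exact ⟨r, by simp, hxr.symm⟩
end

section
/- Let m+n points be in convex position with all m red points consecutive, m,n ≥ 1, m+n ≥ 3. If one of the two bichromatic convex hull edges is removed from the straight-line drawing of the complete bipartite graph, then every plane subdrawing has at most m+n−2 edges; in particular it contains no spanning tree. -/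
open Real

open scoped Classical


def orient2 (x y z : ℝ × ℝ) : ℝ :=
  (y.1 - x.1) * (z.2 - x.2) - (y.2 - x.2) * (z.1 - x.1)

lemma sin_id (a b : ℝ) :
    sin (2*(a+b)) - sin (2*a) - sin (2*b) = -(4 * sin a * sin b * sin (a+b)) := by
  rw [sin_two_mul, sin_two_mul, sin_two_mul, sin_add, cos_add]
  linear_combination (2*sin a*cos a)*(sin_sq_add_cos_sq b) + (2*sin b*cos b)*(sin_sq_add_cos_sq a)

lemma sin3_neg {α β γ : ℝ} (h1 : α < β) (h2 : β < γ) (h3 : γ - α < 2 * π) :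
    sin (β - γ) + sin (γ - α) + sin (α - β) < 0 := by
  set a := (β - α)/2 with ha
  set b := (γ - β)/2 with hb
  have ha0 : 0 < a := by rw [ha]; linarith
  have hb0 : 0 < b := by rw [hb]; linarith
  have hab : a + b < π := by rw [ha, hb]; linarith
  have e1 : β - γ = -(2*b) := by rw [hb]; ring
  have e2 : γ - α = 2*(a+b) := by rw [ha, hb]; ring
  have e3 : α - β = -(2*a) := by rw [ha]; ring
  rw [e1, e2, e3, sin_neg, sin_neg]
  have key : sin (2*(a+b)) - sin (2*a) - sin (2*b) = -(4 * sin a * sin b * sin (a+b)) := sin_id a b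
  have s1 : 0 < sin a := sin_pos_of_pos_of_lt_pi ha0 (by linarith)
  have s2 : 0 < sin b := sin_pos_of_pos_of_lt_pi hb0 (by linarith)
  have s3 : 0 < sin (a+b) := sin_pos_of_pos_of_lt_pi (by linarith) hab
  nlinarith [mul_pos (mul_pos s1 s2) s3]

lemma orient2_pos {c : ℝ × ℝ} {ρ : ℝ} (hρ : 0 < ρ) {α β γ : ℝ}
    (h1 : α < β) (h2 : β < γ) (h3 : γ - α < 2 * π) :
    0 < orient2 (c.1 + ρ * cos α, c.2 + ρ * sin α) (c.1 + ρ * cos β, c.2 + ρ * sin β)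
        (c.1 + ρ * cos γ, c.2 + ρ * sin γ) := by
  have e : orient2 (c.1 + ρ * cos α, c.2 + ρ * sin α) (c.1 + ρ * cos β, c.2 + ρ * sin β)
        (c.1 + ρ * cos γ, c.2 + ρ * sin γ)
      = ρ^2 * (-(sin (β - γ) + sin (γ - α) + sin (α - β))) := by
    simp only [orient2]
    rw [sin_sub, sin_sub, sin_sub]
    ring
  rw [e]
  have := sin3_neg h1 h2 h3
  have h4 : 0 < ρ^2 := by positivity
  exact mul_pos h4 (by linarith)

lemma orient2_combo (x y u v : ℝ × ℝ) {a b : ℝ} (hab : a + b = 1) :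
    orient2 x y (a • u + b • v) = a * orient2 x y u + b * orient2 x y v := by
  have hb : b = 1 - a := by linarith
  subst hb
  simp only [orient2, Prod.fst_add, Prod.snd_add, Prod.smul_fst, Prod.smul_snd, smul_eq_mul]
  ring

lemma orient2_swap23 (x y z : ℝ × ℝ) : orient2 x z y = - orient2 x y z := by
  simp only [orient2]; ring

lemma orient2_cycle (x y z : ℝ × ℝ) : orient2 x y z = orient2 y z x := by
  simp only [orient2]; ring

lemma orient2_self1 (x y : ℝ × ℝ) : orient2 x y x = 0 := by simp only [orient2]; ring
lemma orient2_self2 (x y : ℝ × ℝ) : orient2 x y y = 0 := by simp only [orient2]; ring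

lemma segs_cross {A B C D : ℝ × ℝ}
    (hACB : orient2 A C B < 0) (hACD : 0 < orient2 A C D)
    (hBDA : 0 < orient2 B D A) (hBDC : orient2 B D C < 0) :
    ∃ X, X ∈ openSegment ℝ A C ∧ X ∈ openSegment ℝ B D := by
  set LB := orient2 A C B with hLB
  set LD := orient2 A C D with hLD
  set MA := orient2 B D A with hMA
  set MC := orient2 B D C with hMC
  have hden1 : 0 < LD - LB := by linarith
  have hden2 : 0 < MA - MC := by linarith
  set t := -LB / (LD - LB) with ht
  set s := MA / (MA - MC) with hs
  have ht0 : 0 < t := by apply div_pos <;> linarith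
  have ht1 : t < 1 := by rw [ht, div_lt_one hden1]; linarith
  have hs0 : 0 < s := by apply div_pos <;> linarith
  have hs1 : s < 1 := by rw [hs, div_lt_one hden2]; linarith
  set X := (1 - t) • B + t • D with hX
  set X' := (1 - s) • A + s • C with hX'
  have hXseg : X ∈ openSegment ℝ B D := ⟨1 - t, t, by linarith, ht0, by ring, rfl⟩
  have hX'seg : X' ∈ openSegment ℝ A C := ⟨1 - s, s, by linarith, hs0, by ring, rfl⟩
  have hACX : orient2 A C X = 0 := by
    rw [hX, orient2_combo A C B D (by ring : (1-t) + t = 1), ← hLB, ← hLD, ht]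
    field_simp
    ring
  have hACX' : orient2 A C X' = 0 := by
    rw [hX', orient2_combo A C A C (by ring : (1-s) + s = 1), orient2_self1, orient2_self2]
    ring
  have hBDX : orient2 B D X = 0 := by
    rw [hX, orient2_combo B D B D (by ring : (1-t) + t = 1), orient2_self1, orient2_self2]
    ring
  have hBDX' : orient2 B D X' = 0 := by
    rw [hX', orient2_combo B D A C (by ring : (1-s) + s = 1), ← hMA, ← hMC, hs]
    field_simp
    ring
  -- deduce X = X'
  have h5 : (C.1 - A.1) * (X.2 - X'.2) - (C.2 - A.2) * (X.1 - X'.1) = 0 := by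
    have := hACX; have := hACX'
    simp only [orient2] at hACX hACX'
    linarith
  have h6 : (D.1 - B.1) * (X.2 - X'.2) - (D.2 - B.2) * (X.1 - X'.1) = 0 := by
    simp only [orient2] at hBDX hBDX'
    linarith
  have hD0 : (C.1 - A.1) * (D.2 - B.2) - (C.2 - A.2) * (D.1 - B.1) ≠ 0 := by
    have e : (C.1 - A.1) * (D.2 - B.2) - (C.2 - A.2) * (D.1 - B.1) = LD - LB := by
      rw [hLD, hLB]; simp only [orient2]; ring
    rw [e]; exact ne_of_gt hden1
  have hw1 : X.1 - X'.1 = 0 := by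
    have h7 : (X.1 - X'.1) * ((C.1 - A.1) * (D.2 - B.2) - (C.2 - A.2) * (D.1 - B.1)) = 0 := by
      linear_combination (D.1 - B.1) * h5 - (C.1 - A.1) * h6
    rcases mul_eq_zero.mp h7 with h | h
    · exact h
    · exact absurd h hD0
  have hw2 : X.2 - X'.2 = 0 := by
    have h7 : (X.2 - X'.2) * ((C.1 - A.1) * (D.2 - B.2) - (C.2 - A.2) * (D.1 - B.1)) = 0 := by
      linear_combination (D.2 - B.2) * h5 - (C.2 - A.2) * h6
    rcases mul_eq_zero.mp h7 with h | h
    · exact h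
    · exact absurd h hD0
  have hXX' : X = X' := by
    apply Prod.ext <;> [skip; skip] <;> linarith
  exact ⟨X, hXX' ▸ hX'seg, hXseg⟩

lemma vec_decomp {u v : ℝ × ℝ} (h : u.1 * v.2 - u.2 * v.1 ≠ 0) (w : ℝ × ℝ) :
    ∃ a b : ℝ, w = a • u + b • v := by
  set D := u.1 * v.2 - u.2 * v.1 with hD
  refine ⟨(w.1 * v.2 - w.2 * v.1) / D, (u.1 * w.2 - u.2 * w.1) / D, ?_⟩
  apply Prod.ext
  · simp only [Prod.fst_add, Prod.smul_fst, smul_eq_mul]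
    field_simp
    ring
  · simp only [Prod.snd_add, Prod.smul_snd, smul_eq_mul]
    field_simp
    ring

lemma not_frontier {S : Set (ℝ × ℝ)} {A B K K' X : ℝ × ℝ}
    (hA : A ∈ S) (hB : B ∈ S) (hK : K ∈ S) (hK' : K' ∈ S)
    (ho : (K.1 - A.1) * (B.2 - A.2) - (K.2 - A.2) * (B.1 - A.1) ≠ 0)
    (hX1 : X ∈ openSegment ℝ A B) (hX2 : X ∈ openSegment ℝ K K') :
    X ∉ frontier (convexHull ℝ S) := by
  intro hfr
  set u : ℝ × ℝ := K - A with hu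
  set v : ℝ × ℝ := B - A with hv
  have ho' : u.1 * v.2 - u.2 * v.1 ≠ 0 := by
    simpa [hu, hv] using ho
  -- affine span is everything
  have hspan : affineSpan ℝ S = ⊤ := by
    rw [AffineSubspace.affineSpan_eq_top_iff_vectorSpan_eq_top_of_nonempty ℝ _ _ ⟨A, hA⟩]
    rw [Submodule.eq_top_iff']
    intro w
    obtain ⟨a, b, hw⟩ := vec_decomp ho' w
    rw [hw]
    have h1 : u ∈ vectorSpan ℝ S := by
      have := vsub_mem_vectorSpan ℝ hK hA
      simpa [hu] using this
    have h2 : v ∈ vectorSpan ℝ S := by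
      have := vsub_mem_vectorSpan ℝ hB hA
      simpa [hv] using this
    exact Submodule.add_mem _ (Submodule.smul_mem _ _ h1) (Submodule.smul_mem _ _ h2)
  have hconv : Convex ℝ (convexHull ℝ S) := convex_convexHull ℝ S
  have hint : (interior (convexHull ℝ S)).Nonempty :=
    interior_convexHull_nonempty_iff_affineSpan_eq_top.mpr hspan
  obtain ⟨Y, hY⟩ := hint
  have hXni : X ∉ interior (convexHull ℝ S) := hfr.2
  obtain ⟨f, hf⟩ := geometric_hahn_banach_open_point hconv.interior isOpen_interior hXni
  -- every point of the hull has f-value ≤ f X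
  have hle : ∀ z ∈ convexHull ℝ S, f z ≤ f X := by
    intro z hz
    by_contra hgt
    push_neg at hgt
    rcases le_or_gt (f z) (f Y) with hc | hc
    · have h2 := hf _ (hconv.combo_interior_self_mem_interior hY hz
        (by norm_num : (0:ℝ) < 1/2) (by norm_num : (0:ℝ) ≤ 1/2) (by norm_num))
      rw [map_add, map_smul, map_smul] at h2
      simp only [smul_eq_mul] at h2
      linarith
    · set lam := min (1/2 : ℝ) ((f z - f X) / (2 * (f z - f Y))) with hlam
      have hl0 : 0 < lam := lt_min (by norm_num) (div_pos (by linarith) (by linarith))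
      have hl1 : lam ≤ 1/2 := min_le_left _ _
      have h2 := hf _ (hconv.combo_interior_self_mem_interior hY hz hl0
        (by linarith : (0:ℝ) ≤ 1 - lam) (by ring))
      rw [map_add, map_smul, map_smul] at h2
      simp only [smul_eq_mul] at h2
      have h3 : lam * (f z - f Y) ≤ (f z - f X) / 2 := by
        rw [← le_div_iff₀ (by linarith : (0:ℝ) < f z - f Y), div_div]
        exact min_le_right _ _
      linarith
  have hAle := hle A (subset_convexHull ℝ S hA)
  have hBle := hle B (subset_convexHull ℝ S hB)
  have hKle := hle K (subset_convexHull ℝ S hK)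
  have hK'le := hle K' (subset_convexHull ℝ S hK')
  obtain ⟨a1, b1, ha1, hb1, hab1, hX1e⟩ := hX1
  obtain ⟨a2, b2, ha2, hb2, hab2, hX2e⟩ := hX2
  have hfX1 : a1 * f A + b1 * f B = f X := by
    rw [← hX1e, map_add, map_smul, map_smul]; simp [smul_eq_mul]
  have hfX2 : a2 * f K + b2 * f K' = f X := by
    rw [← hX2e, map_add, map_smul, map_smul]; simp [smul_eq_mul]
  have hcomb1 : a1 * f X + b1 * f X = f X := by rw [← add_mul, hab1, one_mul]
  have hcomb2 : a2 * f X + b2 * f X = f X := by rw [← add_mul, hab2, one_mul]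
  have hfA : f A = f X := by
    by_contra hne
    have hlt : f A < f X := lt_of_le_of_ne hAle hne
    have h1 : a1 * f A < a1 * f X := mul_lt_mul_of_pos_left hlt ha1
    have h2 : b1 * f B ≤ b1 * f X := mul_le_mul_of_nonneg_left hBle hb1.le
    linarith
  have hfB : f B = f X := by
    by_contra hne
    have hlt : f B < f X := lt_of_le_of_ne hBle hne
    have h1 : b1 * f B < b1 * f X := mul_lt_mul_of_pos_left hlt hb1
    have h2 : a1 * f A ≤ a1 * f X := mul_le_mul_of_nonneg_left hAle ha1.le
    linarith
  have hfK : f K = f X := by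
    by_contra hne
    have hlt : f K < f X := lt_of_le_of_ne hKle hne
    have h1 : a2 * f K < a2 * f X := mul_lt_mul_of_pos_left hlt ha2
    have h2 : b2 * f K' ≤ b2 * f X := mul_le_mul_of_nonneg_left hK'le hb2.le
    linarith
  -- f is constant, contradiction with hf at Y
  obtain ⟨a, b, hw⟩ := vec_decomp ho' (Y - A)
  have hYe : Y = A + (a • u + b • v) := by
    rw [← hw]; abel
  have hfY : f Y = f X := by
    rw [hYe, map_add, map_add, map_smul, map_smul, hu, hv, map_sub, map_sub]
    simp only [smul_eq_mul]
    rw [hfA, hfB, hfK]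
    ring
  have := hf Y hY
  rw [hfY] at this
  exact lt_irrefl _ this


lemma circle_cross {c : ℝ × ℝ} {ρ : ℝ} (hρ : 0 < ρ) {α β γ δ : ℝ}
    (h1 : α < β) (h2 : β < γ) (h3 : γ < δ) (h4 : δ - α < 2 * π) :
    ∃ X, X ∈ openSegment ℝ (c.1 + ρ * cos α, c.2 + ρ * sin α) (c.1 + ρ * cos γ, c.2 + ρ * sin γ) ∧
      X ∈ openSegment ℝ (c.1 + ρ * cos β, c.2 + ρ * sin β) (c.1 + ρ * cos δ, c.2 + ρ * sin δ) := by
  apply segs_cross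
  · rw [orient2_swap23]
    have := orient2_pos (c := c) hρ h1 h2 (by linarith)
    linarith
  · exact orient2_pos (c := c) hρ (h1.trans h2) h3 h4
  · rw [← orient2_cycle]
    exact orient2_pos (c := c) hρ h1 (h2.trans h3) h4
  · rw [orient2_swap23]
    have := orient2_pos (c := c) hρ h2 h3 (by linarith)
    linarith

/-- `m` red (indices `< m`, consecutive in circular order) and `n` blue points
in convex position on a circle, `m, n ≥ 1`, `m + n ≥ 3`. If one of the two
bichromatic convex hull edges is removed from the straight-line drawing of the
complete bipartite graph, then every plane subdrawing has at most `m + n - 2`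
edges; in particular it contains no spanning tree. -/
theorem bipartite_convex_minus_hull_edge_no_spanning_tree
    (m n : ℕ) (hm : 1 ≤ m) (hn : 1 ≤ n) (hmn : 3 ≤ m + n)
    (p : Fin (m + n) → ℝ × ℝ) (c : ℝ × ℝ) (ρ : ℝ) (hρ : 0 < ρ)
    (θ : Fin (m + n) → ℝ) (hθmono : StrictMono θ)
    (hθrange : ∀ i, θ i ∈ Set.Ico 0 (2 * π))
    (hp : ∀ i, p i = (c.1 + ρ * cos (θ i), c.2 + ρ * sin (θ i)))
    -- `e₀` is a bichromatic edge on the convex hull boundary that is removed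
    (e₀ : Fin (m + n) × Fin (m + n))
    (he₀ : e₀.1.val < m ∧ m ≤ e₀.2.val)
    (he₀hull : segment ℝ (p e₀.1) (p e₀.2) ⊆ frontier (convexHull ℝ (Set.range p)))
    -- `E` is a plane subdrawing of the remaining bichromatic edges
    (E : Finset (Fin (m + n) × Fin (m + n)))
    (hbip : ∀ e ∈ E, e.1.val < m ∧ m ≤ e.2.val)
    (hne₀ : e₀ ∉ E)
    (hcross : ∀ e ∈ E, ∀ f ∈ E, e ≠ f →
      openSegment ℝ (p e.1) (p e.2) ∩ openSegment ℝ (p f.1) (p f.2) = ∅) :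
    E.card ≤ m + n - 2 ∧
    ¬ ∃ T : SimpleGraph (Fin (m + n)), T.IsTree ∧
        ∀ i j, T.Adj i j → (i, j) ∈ E ∨ (j, i) ∈ E := by
  obtain ⟨ha₀, hb₀⟩ := he₀
  -- crossing chords for interleaved indices
  have hseg : ∀ i j k l : Fin (m + n), i < j → j < k → k < l →
      ∃ X, X ∈ openSegment ℝ (p i) (p k) ∧ X ∈ openSegment ℝ (p j) (p l) := by
    intro i j k l hij hjk hkl
    have h4 : θ l - θ i < 2 * π := by
      have := (hθrange l).2
      have := (hθrange i).1
      linarith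
    obtain ⟨X, h1, h2⟩ := circle_cross hρ (hθmono hij) (hθmono hjk) (hθmono hkl) h4
    rw [hp i, hp j, hp k, hp l]
    exact ⟨X, h1, h2⟩
  have horient : ∀ i j k : Fin (m + n), i < j → j < k → 0 < orient2 (p i) (p j) (p k) := by
    intro i j k h1 h2
    rw [hp i, hp j, hp k]
    exact orient2_pos hρ (hθmono h1) (hθmono h2)
      (by linarith [(hθrange k).2, (hθrange i).1])
  -- non-crossing implies monotone structure
  have key : ∀ e ∈ E, ∀ f ∈ E, e.1.val < f.1.val → f.2.val ≤ e.2.val := by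
    intro e he f hf hlt
    by_contra hcon
    push_neg at hcon
    obtain ⟨he1, he2⟩ := hbip e he
    obtain ⟨hf1, hf2⟩ := hbip f hf
    obtain ⟨X, hX1, hX2⟩ := hseg e.1 f.1 e.2 f.2 (Fin.lt_def.mpr hlt)
      (Fin.lt_def.mpr (lt_of_lt_of_le hf1 he2)) (Fin.lt_def.mpr hcon)
    have hef : e ≠ f := by
      intro h
      rw [h] at hlt
      omega
    exact Set.eq_empty_iff_forall_notMem.mp (hcross e he f hf hef) X ⟨hX1, hX2⟩
  -- the removed edge is one of the two bichromatic hull edges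
  have hchar : (e₀.1.val = m - 1 ∧ e₀.2.val = m) ∨ (e₀.1.val = 0 ∧ e₀.2.val = m + n - 1) := by
    by_contra hcon
    push_neg at hcon
    obtain ⟨h1, h2⟩ := hcon
    have hb2 : e₀.2.val < m + n := e₀.2.isLt
    have hab : e₀.1.val + 1 < e₀.2.val := by omega
    set k : Fin (m + n) := ⟨e₀.1.val + 1, by omega⟩ with hk
    have hkv : k.val = e₀.1.val + 1 := rfl
    have hfr : ∀ X ∈ openSegment ℝ (p e₀.1) (p e₀.2),
        X ∈ frontier (convexHull ℝ (Set.range p)) :=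
      fun X hX => he₀hull (openSegment_subset_segment ℝ _ _ hX)
    have hoAKB : (((p k).1 - (p e₀.1).1) * ((p e₀.2).2 - (p e₀.1).2) -
        ((p k).2 - (p e₀.1).2) * ((p e₀.2).1 - (p e₀.1).1)) ≠ 0 := by
      have := horient e₀.1 k e₀.2 (Fin.lt_def.mpr (by omega)) (Fin.lt_def.mpr (by omega))
      simp only [orient2] at this
      exact ne_of_gt this
    rcases Nat.eq_zero_or_pos e₀.1.val with h0 | h0
    · have hblt : e₀.2.val < m + n - 1 := by
        have := h2 h0
        omega
      set k' : Fin (m + n) := ⟨m + n - 1, by omega⟩ with hk'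
      have hk'v : k'.val = m + n - 1 := rfl
      obtain ⟨X, hX1, hX2⟩ := hseg e₀.1 k e₀.2 k' (Fin.lt_def.mpr (by omega))
        (Fin.lt_def.mpr (by omega)) (Fin.lt_def.mpr (by omega))
      exact not_frontier (Set.mem_range_self e₀.1) (Set.mem_range_self e₀.2)
        (Set.mem_range_self k) (Set.mem_range_self k') hoAKB hX1 hX2 (hfr X hX1)
    · set k' : Fin (m + n) := ⟨0, by omega⟩ with hk'
      have hk'v : k'.val = 0 := rfl
      obtain ⟨X, hX1, hX2⟩ := hseg k' e₀.1 k e₀.2 (Fin.lt_def.mpr (by omega))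
        (Fin.lt_def.mpr (by omega)) (Fin.lt_def.mpr (by omega))
      refine not_frontier (Set.mem_range_self e₀.1) (Set.mem_range_self e₀.2)
        (Set.mem_range_self k) (Set.mem_range_self k') hoAKB hX2 ?_ (hfr X hX2)
      rw [openSegment_symm]
      exact hX1
  -- the cardinality bound
  have hcard : E.card ≤ m + n - 2 := by
    classical
    rcases hchar with ⟨h1, h2⟩ | ⟨h1, h2⟩
    · have hmaps : ∀ e ∈ E, e.1.val + (m + n - 1 - e.2.val) ∈
          (Finset.range (m + n - 1)).erase (m + n - 2) := by
        intro e he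
        obtain ⟨q1, q2⟩ := hbip e he
        have q3 := e.2.isLt
        rw [Finset.mem_erase, Finset.mem_range]
        constructor
        · intro heq
          have q4 : e.1.val = e₀.1.val := by omega
          have q5 : e.2.val = e₀.2.val := by omega
          have : e = e₀ := Prod.ext (Fin.ext q4) (Fin.ext q5)
          exact hne₀ (this ▸ he)
        · omega
      have hinj : Set.InjOn (fun e : Fin (m+n) × Fin (m+n) => e.1.val + (m + n - 1 - e.2.val))
          ↑E := by
        intro e he f hf heq
        simp only at heq
        obtain ⟨q1, q2⟩ := hbip e he
        obtain ⟨q3, q4⟩ := hbip f hf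
        have q5 := e.2.isLt
        have q6 := f.2.isLt
        rcases lt_trichotomy e.1.val f.1.val with h | h | h
        · have := key e he f hf h
          omega
        · have q7 : e.2.val = f.2.val := by omega
          exact Prod.ext (Fin.ext h) (Fin.ext q7)
        · have := key f hf e he h
          omega
      have hle := Finset.card_le_card_of_injOn _ hmaps hinj
      rw [Finset.card_erase_of_mem (Finset.mem_range.mpr (by omega)), Finset.card_range] at hle
      omega
    · have hmaps : ∀ e ∈ E, e.1.val + (m + n - 1 - e.2.val) ∈
          (Finset.range (m + n - 1)).erase 0 := by
        intro e he
        obtain ⟨q1, q2⟩ := hbip e he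
        have q3 := e.2.isLt
        rw [Finset.mem_erase, Finset.mem_range]
        constructor
        · intro heq
          have q4 : e.1.val = e₀.1.val := by omega
          have q5 : e.2.val = e₀.2.val := by omega
          have : e = e₀ := Prod.ext (Fin.ext q4) (Fin.ext q5)
          exact hne₀ (this ▸ he)
        · omega
      have hinj : Set.InjOn (fun e : Fin (m+n) × Fin (m+n) => e.1.val + (m + n - 1 - e.2.val))
          ↑E := by
        intro e he f hf heq
        simp only at heq
        obtain ⟨q1, q2⟩ := hbip e he
        obtain ⟨q3, q4⟩ := hbip f hf
        have q5 := e.2.isLt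
        have q6 := f.2.isLt
        rcases lt_trichotomy e.1.val f.1.val with h | h | h
        · have := key e he f hf h
          omega
        · have q7 : e.2.val = f.2.val := by omega
          exact Prod.ext (Fin.ext h) (Fin.ext q7)
        · have := key f hf e he h
          omega
      have hle := Finset.card_le_card_of_injOn _ hmaps hinj
      rw [Finset.card_erase_of_mem (Finset.mem_range.mpr (by omega)), Finset.card_range] at hle
      omega
  refine ⟨hcard, ?_⟩
  rintro ⟨T, hT, hTE⟩
  classical
  haveI : Fintype T.edgeSet := Fintype.ofFinite _
  have hTc := hT.card_edgeFinset
  rw [Fintype.card_fin] at hTc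
  set φ : Sym2 (Fin (m + n)) → Fin (m + n) × Fin (m + n) :=
    Sym2.lift ⟨fun i j => if i.val < j.val then (i, j) else (j, i), by
      intro i j
      dsimp only
      split_ifs with hone htwo
      · exact absurd htwo (by omega)
      · rfl
      · rfl
      · have : i = j := Fin.ext (by omega)
        subst this
        rfl⟩ with hφ
  have hmap : ∀ s ∈ T.edgeFinset, φ s ∈ E := by
    intro s hs
    induction s using Sym2.ind with
    | _ i j =>
      rw [SimpleGraph.mem_edgeFinset, SimpleGraph.mem_edgeSet] at hs
      rcases hTE i j hs with h | h
      · obtain ⟨q1, q2⟩ := hbip _ h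
        have q1' : i.val < m := q1
        have q2' : m ≤ j.val := q2
        simp only [hφ, Sym2.lift_mk]
        rw [if_pos (by omega : i.val < j.val)]
        exact h
      · obtain ⟨q1, q2⟩ := hbip _ h
        have q1' : j.val < m := q1
        have q2' : m ≤ i.val := q2
        simp only [hφ, Sym2.lift_mk]
        rw [if_neg (by omega : ¬ i.val < j.val)]
        exact h
  have hφinv : ∀ s : Sym2 (Fin (m + n)), Sym2.mk (φ s).1 (φ s).2 = s := by
    intro s
    induction s using Sym2.ind with
    | _ i j =>
      simp only [hφ, Sym2.lift_mk]
      split_ifs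
      · rfl
      · exact (Sym2.eq_swap)
  have hinj : Set.InjOn φ ↑T.edgeFinset := fun s _ t _ h => by
    rw [← hφinv s, ← hφinv t, h]
  have hle := Finset.card_le_card_of_injOn φ hmap hinj
  omega
end

section
/- For points in the plane in general position partitioned into red and blue classes, if v is a red point and the rays from v through each blue point partition the plane into wedges, then assigning each remaining red point to the blue point defining the boundary ray of its half-wedge (split by angle bisectors) yields segments that do not cross any segment from v to a blue point. -/
open EuclideanGeometry

open scoped Classical
open scoped RealInnerProductSpace

lemma angle_combo_lt {V : Type*} [NormedAddCommGroup V] [InnerProductSpace ℝ V]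
    {a c : V} (ha : a ≠ 0) (hc : c ≠ 0)
    (hlt : ⟪a, c⟫ < ‖a‖ * ‖c‖) (hgt : -(‖a‖ * ‖c‖) < ⟪a, c⟫)
    {l m : ℝ} (hl : 0 < l) (hm : 0 < m) :
    InnerProductGeometry.angle a (l • a + m • c) < InnerProductGeometry.angle a c := by
  set A := ‖a‖ with hA_def
  set C := ‖c‖ with hC_def
  set t := ⟪a, c⟫ with ht_def
  set u := l • a + m • c with hu_def
  set U := ‖u‖ with hU_def
  have hA : 0 < A := norm_pos_iff.2 ha
  have hC : 0 < C := norm_pos_iff.2 hc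
  have hU2 : U ^ 2 = l ^ 2 * A ^ 2 + m ^ 2 * C ^ 2 + 2 * (l * m * t) := by
    rw [hU_def, hu_def, norm_add_sq_real, norm_smul, norm_smul,
      real_inner_smul_left, real_inner_smul_right]
    simp [abs_of_pos hl, abs_of_pos hm, mul_pow]
    ring
  have hUpos : 0 < U := by
    have h1 : 0 < U ^ 2 := by
      nlinarith [sq_nonneg (l * A - m * C),
        mul_pos (mul_pos hl hm) (show (0:ℝ) < t + A * C by linarith)]
    have h2 : 0 ≤ U := norm_nonneg _
    nlinarith
  have hiu : ⟪a, u⟫ = l * A ^ 2 + m * t := by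
    rw [hu_def, inner_add_right, real_inner_smul_right, real_inner_smul_right,
      real_inner_self_eq_norm_sq]
  have hUlt : U < l * A + m * C := by
    nlinarith [mul_pos (mul_pos hl hm) (show (0:ℝ) < A * C - t by linarith), hUpos,
      mul_pos hl hA, mul_pos hm hC]
  have hUgt : m * C - l * A < U := by
    nlinarith [mul_pos (mul_pos hl hm) (show (0:ℝ) < t + A * C by linarith)]
  have key : t * U < (l * A ^ 2 + m * t) * C := by
    rcases le_or_gt t 0 with h | h
    · nlinarith [mul_pos hA hC, mul_pos hl (mul_pos (mul_pos hA hA) hC)]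
    · nlinarith [mul_pos hl (mul_pos hA (show (0:ℝ) < A * C - t by linarith))]
  have hdiv : t / (A * C) < ⟪a, u⟫ / (A * U) := by
    rw [div_lt_div_iff₀ (by positivity) (by positivity), hiu]
    nlinarith [key, hA]
  have e1 : InnerProductGeometry.angle a u = Real.arccos (⟪a, u⟫ / (A * U)) := rfl
  have e2 : InnerProductGeometry.angle a c = Real.arccos (t / (A * C)) := rfl
  rw [e1, e2]
  apply Real.strictAntiOn_arccos _ _ hdiv
  · exact Set.mem_Icc.2 (abs_le.1 (abs_real_inner_div_norm_mul_norm_le_one a c))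
  · exact Set.mem_Icc.2 (abs_le.1 (abs_real_inner_div_norm_mul_norm_le_one a u))


lemma collinear_of_smul {V : Type*} [NormedAddCommGroup V] [InnerProductSpace ℝ V]
    {v w b : V} {r : ℝ} (h : w - v = r • (b - v)) :
    Collinear ℝ ({v, w, b} : Set V) := by
  rw [collinear_iff_of_mem (Set.mem_insert v {w, b})]
  refine ⟨b - v, fun p hp => ?_⟩
  simp only [Set.mem_insert_iff, Set.mem_singleton_iff] at hp
  rcases hp with rfl | rfl | rfl
  · exact ⟨0, by simp⟩
  · exact ⟨r, by rw [← h]; simp⟩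
  · exact ⟨1, by simp⟩

/-- For points in general position partitioned into red and blue classes with
`v` red, assigning each remaining red point `w` to the blue point `bw w` on the
ray bounding its half-wedge (i.e. the blue point minimizing the angle at `v`
between the ray through `w` and the ray through a blue point, as produced by
splitting the wedges with angle bisectors) yields segments that do not cross
any segment from `v` to a blue point. -/
theorem half_wedge_assignment_no_crossing
    (R B : Finset (EuclideanSpace ℝ (Fin 2)))
    (hR : R.Nonempty) (hB : B.Nonempty) (hdisj : Disjoint R B)
    (hgp : ∀ p ∈ R ∪ B, ∀ q ∈ R ∪ B, ∀ s ∈ R ∪ B, p ≠ q → q ≠ s → p ≠ s →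
      ¬ Collinear ℝ ({p, q, s} : Set (EuclideanSpace ℝ (Fin 2))))
    (v : EuclideanSpace ℝ (Fin 2)) (hv : v ∈ R)
    (bw : EuclideanSpace ℝ (Fin 2) → EuclideanSpace ℝ (Fin 2))
    (hbw : ∀ w ∈ R, w ≠ v → bw w ∈ B ∧
      ∀ b ∈ B, ∠ w v (bw w) ≤ ∠ w v b) :
    ∀ w ∈ R, w ≠ v → ∀ b ∈ B,
      openSegment ℝ w (bw w) ∩ openSegment ℝ v b = ∅ := by
  intro w hw hwv b hb
  obtain ⟨hb', hmin⟩ := hbw w hw hwv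
  rw [Set.eq_empty_iff_forall_notMem]
  rintro x ⟨hx1, hx2⟩
  rw [openSegment] at hx1 hx2
  obtain ⟨l, m, hl, hm, hlm, hx⟩ := hx1
  obtain ⟨s, t, hs, ht, hst, hx'⟩ := hx2
  -- basic distinctness
  have hwB : w ∉ B := fun h => (Finset.disjoint_left.1 hdisj hw) h
  have hvB : v ∉ B := fun h => (Finset.disjoint_left.1 hdisj hv) h
  have hwb' : w ≠ bw w := fun h => hwB (h ▸ hb')
  have hvb' : v ≠ bw w := fun h => hvB (h ▸ hb')
  have ha : w - v ≠ 0 := sub_ne_zero.2 hwv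
  have hcne : bw w - v ≠ 0 := sub_ne_zero.2 (Ne.symm hvb')
  -- non-collinearity of v, w, bw w
  have hmemv : v ∈ R ∪ B := Finset.mem_union_left _ hv
  have hmemw : w ∈ R ∪ B := Finset.mem_union_left _ hw
  have hmemb' : bw w ∈ R ∪ B := Finset.mem_union_right _ hb'
  have hncol : ¬ Collinear ℝ ({v, w, bw w} : Set (EuclideanSpace ℝ (Fin 2))) :=
    hgp v hmemv w hmemw (bw w) hmemb' (Ne.symm hwv) hwb' hvb'
  have hpar : ∀ r : ℝ, w - v ≠ r • (bw w - v) := by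
    intro r hr
    exact hncol (collinear_of_smul hr)
  set a := w - v with ha_def
  set c := bw w - v with hc_def
  -- bounds on the inner product
  have hlt : ⟪a, c⟫ < ‖a‖ * ‖c‖ := by
    rw [inner_lt_norm_mul_iff_real]
    intro h
    apply hpar (‖a‖ / ‖c‖)
    have hC : (0:ℝ) < ‖c‖ := norm_pos_iff.2 hcne
    have := congrArg (fun z => (‖c‖)⁻¹ • z) h
    simpa [smul_smul, hC.ne', div_eq_inv_mul] using this
  have hgt : -(‖a‖ * ‖c‖) < ⟪a, c⟫ := by
    have h2 : ⟪a, -c⟫ < ‖a‖ * ‖-c‖ := by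
      rw [inner_lt_norm_mul_iff_real]
      intro h
      apply hpar (-(‖a‖ / ‖c‖))
      have hC : (0:ℝ) < ‖c‖ := norm_pos_iff.2 hcne
      rw [norm_neg] at h
      have := congrArg (fun z => (‖c‖)⁻¹ • z) h
      simpa [smul_smul, hC.ne', div_eq_inv_mul, neg_smul, smul_neg] using this
    rw [inner_neg_right, norm_neg] at h2
    linarith
  -- express x - v two ways
  have hxv1 : x - v = l • a + m • c := by
    have h : l • a + m • c = (l • w + m • bw w) - (l + m) • v := by
      rw [ha_def, hc_def]; module
    rw [h, hlm, one_smul, hx]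
  have hxv2 : x - v = t • (b - v) := by
    have h : t • (b - v) = (s • v + t • b) - (s + t) • v := by module
    rw [h, hst, one_smul, hx']
  -- angle computations
  have e1 : ∠ w v x = InnerProductGeometry.angle a (x - v) := rfl
  have e2 : ∠ w v b = InnerProductGeometry.angle a (b - v) := rfl
  have e3 : ∠ w v (bw w) = InnerProductGeometry.angle a c := rfl
  have eq1 : ∠ w v x = ∠ w v b := by
    rw [e1, e2, hxv2, InnerProductGeometry.angle_smul_right_of_pos _ _ ht]
  have lt1 : ∠ w v x < ∠ w v (bw w) := by
    rw [e1, e3, hxv1]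
    exact angle_combo_lt ha hcne hlt hgt hl hm
  have := hmin b hb
  linarith
end
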